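/- arXiv:2507.19659 — 6 statements merged into one kernel-verified Lean document; each statement's English description precedes it below -/
import Mathlib

section
/- Likelihood lower bound (Lemma 1): Let A be a finite alphabet with |A| = a ≥ 2, q = a−1, 0 < γmin ≤ γmax, λ ≥ max(γmax, γmin + γmax/q), and let Q̃ be a rate matrix on A^n whose off-diagonal entries vanish when d_H(u,v) > 1, lie in [γmin, γmax] when d_H(u,v) = 1, and whose rows sum to zero. Set λ_R = nqλ and R̃ = I + Q̃/λ_R. Then for any x, y ∈ A^n with r := d_H(x,y) and any T > 0, p_{(T,Q̃)}(y|x) := e^{−λ_R T} Σ_{m≥r} (λ_R T)^m/m! · (R̃^m)_{x,y} ≥ exp(−λ_R T + r·log(T·γmin)), i.e. p_{(T,Q̃)}(y|x) ≥ e^{−λ_R T}·(T·γmin)^r. -/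
open Finset

lemma sphere_card_le (a n : ℕ) (u : Fin n → Fin a) :
    (Finset.univ.filter fun v => hammingDist u v = 1).card ≤ n * (a - 1) := by
  classical
  rw [← Fintype.card_subtype]
  have hcard : Fintype.card {p : Fin n × Fin a // p.2 ≠ u p.1} = n * (a - 1) := by
    rw [Fintype.card_congr (Equiv.subtypeProdEquivSigmaSubtype (fun i b => b ≠ u i)),
      Fintype.card_sigma]
    have : ∀ i : Fin n, Fintype.card {b : Fin a // b ≠ u i} = a - 1 := by
      intro i
      have := Fintype.card_subtype_compl (fun b : Fin a => b = u i)
      simpa [Fintype.card_subtype_eq] using this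
    simp [this, Finset.sum_const, mul_comm]
  rw [← hcard]
  have key : ∀ v : {v : Fin n → Fin a // hammingDist u v = 1},
      ∃ i : Fin n, (Finset.univ.filter fun j => u j ≠ v.1 j) = {i} := by
    intro v
    exact Finset.card_eq_one.mp v.2
  choose idx hidx using key
  refine Fintype.card_le_of_injective
    (fun v => ⟨(idx v, v.1 (idx v)), ?_⟩) ?_
  · have : idx v ∈ ({idx v} : Finset (Fin n)) := Finset.mem_singleton_self _
    rw [← hidx v] at this
    simp only [Finset.mem_filter] at this
    exact fun h => this.2 h.symm
  · rintro ⟨v, hv⟩ ⟨w, hw⟩ h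
    simp only [Subtype.mk.injEq, Prod.mk.injEq] at h
    obtain ⟨hi, hval⟩ := h
    ext j
    by_cases hj : j = idx ⟨v, hv⟩
    · subst hj
      exact congrArg Fin.val (show v _ = w _ by rw [hval, ← hi])
    · have h1 : j ∉ ({idx ⟨v, hv⟩} : Finset (Fin n)) := by simpa using hj
      have h2 : j ∉ ({idx ⟨w, hw⟩} : Finset (Fin n)) := by simpa [← hi] using hj
      rw [← hidx ⟨v, hv⟩] at h1
      rw [← hidx ⟨w, hw⟩] at h2
      simp only [Finset.mem_filter, Finset.mem_univ, true_and, not_not] at h1 h2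
      exact congrArg Fin.val (show v j = w j by rw [← h1, ← h2])



section
variable {a n : ℕ} (R : Matrix (Fin n → Fin a) (Fin n → Fin a) ℝ)

lemma matpow_nonneg
    (hnn : ∀ u v, 0 ≤ R u v) (m : ℕ) : ∀ u v, 0 ≤ (R ^ m) u v := by
  induction m with
  | zero =>
    intro u v
    by_cases h : u = v <;> simp [Matrix.one_apply, h]
  | succ m ih =>
    intro u v
    rw [pow_succ, Matrix.mul_apply]
    exact Finset.sum_nonneg fun z _ => mul_nonneg (ih u z) (hnn z v)

lemma matpow_rowsum
    (hrow : ∀ u, ∑ v, R u v = 1) (m : ℕ) : ∀ u, ∑ v, (R ^ m) u v = 1 := by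
  induction m with
  | zero => intro u; simp [Matrix.one_apply]
  | succ m ih =>
    intro u
    simp only [pow_succ, Matrix.mul_apply]
    rw [Finset.sum_comm]
    calc ∑ z, ∑ v, (R ^ m) u z * R z v
        = ∑ z, (R ^ m) u z * ∑ v, R z v := by simp [Finset.mul_sum]
      _ = 1 := by simp [hrow, ih]

lemma hamming_update_one {x y : Fin n → Fin a} (i : Fin n) (hi : x i ≠ y i) :
    hammingDist x (Function.update x i (y i)) = 1 := by
  classical
  have h : (Finset.univ.filter fun j => x j ≠ Function.update x i (y i) j) = {i} := by
    ext j
    by_cases hj : j = i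
    · subst hj; simp [Function.update_self, hi]
    · simp [Function.update_of_ne hj, hj]
  simp only [hammingDist]
  rw [h, Finset.card_singleton]

lemma hamming_update_pred {x y : Fin n → Fin a} (i : Fin n) (hi : x i ≠ y i) (r : ℕ)
    (h : hammingDist x y = r + 1) :
    hammingDist (Function.update x i (y i)) y = r := by
  classical
  have hmem : i ∈ Finset.univ.filter fun j => x j ≠ y j := by simp [hi]
  have he : (Finset.univ.filter fun j => Function.update x i (y i) j ≠ y j)
      = (Finset.univ.filter fun j => x j ≠ y j).erase i := by
    ext j
    by_cases hj : j = i
    · subst hj; simp [Function.update_self]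
    · simp [Function.update_of_ne hj, hj]
  simp only [hammingDist] at h ⊢
  rw [he, Finset.card_erase_of_mem hmem, h]; rfl

lemma pow_entry_lower
    (hnn : ∀ u v, 0 ≤ R u v) (ε : ℝ) (hε : 0 ≤ ε)
    (hstep : ∀ u v, hammingDist u v = 1 → ε ≤ R u v) :
    ∀ (r : ℕ) (x y : Fin n → Fin a), hammingDist x y = r →
      (r.factorial : ℝ) * ε ^ r ≤ (R ^ r) x y := by
  classical
  intro r
  induction r with
  | zero =>
    intro x y h
    have hxy := hammingDist_eq_zero.mp h
    subst hxy
    simp [Matrix.one_apply]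
  | succ r ih =>
    intro x y h
    set D := Finset.univ.filter (fun i => x i ≠ y i) with hDdef
    have hD : D.card = r + 1 := h
    set S := D.image (fun i => Function.update x i (y i)) with hSdef
    have hinj : Set.InjOn (fun i => Function.update x i (y i)) D := by
      intro i hi j hj hij
      by_contra hne
      have hc := congrFun hij i
      simp only at hc
      rw [Function.update_self, Function.update_of_ne hne] at hc
      simp only [hDdef, Finset.coe_filter, Set.mem_setOf_eq] at hi
      exact hi.2 hc.symm
    have hScard : S.card = r + 1 := by
      rw [hSdef, Finset.card_image_of_injOn hinj, hD]
    have hzfact : ∀ z ∈ S, ε * ((r.factorial : ℝ) * ε ^ r) ≤ R x z * (R ^ r) z y := by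
      intro z hz
      rw [hSdef, Finset.mem_image] at hz
      obtain ⟨i, hi, rfl⟩ := hz
      rw [hDdef, Finset.mem_filter] at hi
      have h1 := hamming_update_one (x := x) (y := y) i hi.2
      have h2 := hamming_update_pred (x := x) (y := y) i hi.2 r h
      exact mul_le_mul (hstep _ _ h1) (ih _ _ h2)
        (mul_nonneg (by positivity) (pow_nonneg hε r)) (hnn _ _)
    have expand : (R ^ (r + 1)) x y = ∑ z, R x z * (R ^ r) z y := by
      rw [pow_succ', Matrix.mul_apply]
    have hsub : ∑ z ∈ S, R x z * (R ^ r) z y ≤ ∑ z, R x z * (R ^ r) z y :=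
      Finset.sum_le_sum_of_subset_of_nonneg (Finset.subset_univ S)
        (fun z _ _ => mul_nonneg (hnn _ _) (matpow_nonneg R hnn r z y))
    have hlow : ((r + 1 : ℕ) : ℝ) * (ε * ((r.factorial : ℝ) * ε ^ r))
        ≤ ∑ z ∈ S, R x z * (R ^ r) z y := by
      have := Finset.card_nsmul_le_sum S (fun z => R x z * (R ^ r) z y)
        (ε * ((r.factorial : ℝ) * ε ^ r)) hzfact
      rw [hScard] at this
      simpa [nsmul_eq_mul] using this
    rw [expand]
    refine le_trans (le_of_eq ?_) (le_trans hlow hsub)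
    rw [Nat.factorial_succ]
    push_cast
    ring
end



/-- **Likelihood lower bound (Lemma 1).** With `λ_R = nqλ` and `R̃ = I + Q̃/λ_R`,
`p_{(T,Q̃)}(y|x) = e^{−λ_R T} Σ_{m≥r} (λ_R T)^m/m! (R̃^m)_{x,y} ≥ e^{−λ_R T + r log(T γmin)}`,
i.e. `p ≥ e^{−λ_R T} (T γmin)^r`. -/
theorem likelihood_lower_bound
    (a n : ℕ) (ha : 2 ≤ a)
    (γmin γmax lam : ℝ)
    (hγmin : 0 < γmin) (hγ : γmin ≤ γmax)
    (hlam : max γmax (γmin + γmax / ((a : ℝ) - 1)) ≤ lam)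
    (Q : Matrix (Fin n → Fin a) (Fin n → Fin a) ℝ)
    (hQ1 : ∀ u v : Fin n → Fin a, hammingDist u v = 1 → Q u v ∈ Set.Icc γmin γmax)
    (hQ2 : ∀ u v : Fin n → Fin a, u ≠ v → hammingDist u v ≠ 1 → Q u v = 0)
    (hQ3 : ∀ u : Fin n → Fin a, ∑ v, Q u v = 0)
    (x y : Fin n → Fin a) (T : ℝ) (hT : 0 < T) :
    (Real.exp (-(((n : ℝ) * ((a : ℝ) - 1) * lam) * T)
        + (hammingDist x y : ℝ) * Real.log (T * γmin))
      ≤ Real.exp (-(((n : ℝ) * ((a : ℝ) - 1) * lam) * T)) *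
        ∑' m : ℕ, if hammingDist x y ≤ m then
          (((n : ℝ) * ((a : ℝ) - 1) * lam) * T) ^ m / (Nat.factorial m) *
            ((1 + (((n : ℝ) * ((a : ℝ) - 1) * lam))⁻¹ • Q) ^ m) x y
          else 0)
    ∧ (Real.exp (-(((n : ℝ) * ((a : ℝ) - 1) * lam) * T)) * (T * γmin) ^ (hammingDist x y)
      ≤ Real.exp (-(((n : ℝ) * ((a : ℝ) - 1) * lam) * T)) *
        ∑' m : ℕ, if hammingDist x y ≤ m then
          (((n : ℝ) * ((a : ℝ) - 1) * lam) * T) ^ m / (Nat.factorial m) *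
            ((1 + (((n : ℝ) * ((a : ℝ) - 1) * lam))⁻¹ • Q) ^ m) x y
          else 0) := by
  classical
  set c : ℝ := (n : ℝ) * ((a : ℝ) - 1) * lam with hcdef
  set R : Matrix (Fin n → Fin a) (Fin n → Fin a) ℝ := 1 + c⁻¹ • Q with hRdef
  set r : ℕ := hammingDist x y with hrdef
  have ha1 : (1 : ℝ) ≤ (a : ℝ) - 1 := by
    have : (2 : ℝ) ≤ (a : ℝ) := by exact_mod_cast ha
    linarith
  have hγmax : 0 < γmax := lt_of_lt_of_le hγmin hγ
  have hlam1 : γmax ≤ lam := le_trans (le_max_left _ _) hlam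
  have hlam0 : 0 < lam := lt_of_lt_of_le hγmax hlam1
  have hnq : (0 : ℝ) ≤ (n : ℝ) * ((a : ℝ) - 1) := by
    have : (0:ℝ) ≤ (n:ℝ) := Nat.cast_nonneg n
    nlinarith
  have hc0 : (0 : ℝ) ≤ c := by
    rw [hcdef]; exact mul_nonneg hnq hlam0.le
  have hcinv : (0 : ℝ) ≤ c⁻¹ := inv_nonneg.mpr hc0
  -- off-diagonal entries
  have hoff : ∀ u v : Fin n → Fin a, u ≠ v → R u v = c⁻¹ * Q u v := by
    intro u v huv
    rw [hRdef]
    simp [Matrix.add_apply, Matrix.smul_apply, Matrix.one_apply_ne huv, smul_eq_mul]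
  -- diagonal lower bound for Q
  have hdiagQ : ∀ u : Fin n → Fin a, -((n : ℝ) * ((a : ℝ) - 1) * γmax) ≤ Q u u := by
    intro u
    have hsplit : Q u u + ∑ v ∈ Finset.univ.erase u, Q u v = 0 := by
      rw [Finset.add_sum_erase _ _ (Finset.mem_univ u)]
      exact hQ3 u
    have h1 : ∑ v ∈ Finset.univ.erase u, Q u v
        = ∑ v ∈ (Finset.univ.erase u).filter (fun v => hammingDist u v = 1), Q u v := by
      refine (Finset.sum_filter_of_ne ?_).symm
      intro v hv hne
      by_contra hd
      exact hne (hQ2 u v (fun h => (Finset.mem_erase.mp hv).1 h.symm) hd)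
    have h2 : (((Finset.univ.erase u).filter (fun v => hammingDist u v = 1)).card : ℝ)
        ≤ (n : ℝ) * ((a : ℝ) - 1) := by
      have hsub : ((Finset.univ.erase u).filter (fun v => hammingDist u v = 1)).card
          ≤ n * (a - 1) :=
        le_trans (Finset.card_le_card
          (Finset.filter_subset_filter _ (Finset.erase_subset _ _))) (sphere_card_le a n u)
      calc (((Finset.univ.erase u).filter (fun v => hammingDist u v = 1)).card : ℝ)
          ≤ ((n * (a - 1) : ℕ) : ℝ) := by exact_mod_cast hsub
        _ = (n : ℝ) * ((a : ℝ) - 1) := by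
            push_cast [Nat.cast_sub (by omega : 1 ≤ a)]
            ring
    have h3 : ∑ v ∈ (Finset.univ.erase u).filter (fun v => hammingDist u v = 1), Q u v
        ≤ (((Finset.univ.erase u).filter (fun v => hammingDist u v = 1)).card : ℝ) * γmax := by
      rw [← nsmul_eq_mul]
      refine Finset.sum_le_card_nsmul _ _ _ ?_
      intro v hv
      exact (hQ1 u v (Finset.mem_filter.mp hv).2).2
    have h4 : ∑ v ∈ Finset.univ.erase u, Q u v ≤ (n : ℝ) * ((a : ℝ) - 1) * γmax := by
      rw [h1]
      exact le_trans h3 (mul_le_mul_of_nonneg_right h2 hγmax.le)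
    linarith
  -- nonnegativity of R entries
  have hnn : ∀ u v : Fin n → Fin a, 0 ≤ R u v := by
    intro u v
    by_cases huv : u = v
    · subst huv
      have hRu : R u u = 1 + c⁻¹ * Q u u := by
        rw [hRdef]; simp [Matrix.add_apply, Matrix.smul_apply, Matrix.one_apply_eq, smul_eq_mul]
      rw [hRu]
      have hBc : (n : ℝ) * ((a : ℝ) - 1) * γmax ≤ c := by
        rw [hcdef]; exact mul_le_mul_of_nonneg_left hlam1 hnq
      have hB0 : (0 : ℝ) ≤ (n : ℝ) * ((a : ℝ) - 1) * γmax := mul_nonneg hnq hγmax.le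
      rcases eq_or_lt_of_le hc0 with hc | hc
      · have hQu : 0 ≤ Q u u := by
          have : (n : ℝ) * ((a : ℝ) - 1) * γmax ≤ 0 := by rw [hc]; exact hBc
          have hB := le_antisymm this hB0
          have := hdiagQ u
          rw [hB] at this
          simpa using this
        have := mul_nonneg hcinv hQu
        linarith
      · have hm1 : -1 ≤ c⁻¹ * Q u u := by
          have hQc : -c ≤ Q u u := le_trans (by linarith) (hdiagQ u)
          have := mul_le_mul_of_nonneg_left hQc hcinv
          have hcc : c⁻¹ * c = 1 := inv_mul_cancel₀ (ne_of_gt hc)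
          calc (-1 : ℝ) = c⁻¹ * -c := by rw [mul_neg, hcc]
            _ ≤ c⁻¹ * Q u u := this
        linarith
    · rw [hoff u v huv]
      by_cases hd : hammingDist u v = 1
      · exact mul_nonneg hcinv (le_trans hγmin.le (hQ1 u v hd).1)
      · rw [hQ2 u v huv hd, mul_zero]
  -- row sums of R
  have hrow : ∀ u : Fin n → Fin a, ∑ v, R u v = 1 := by
    intro u
    rw [hRdef]
    simp only [Matrix.add_apply, Matrix.smul_apply, smul_eq_mul]
    rw [Finset.sum_add_distrib, ← Finset.mul_sum, hQ3 u, mul_zero, add_zero]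
    simp [Matrix.one_apply]
  -- step lower bound
  set ε : ℝ := c⁻¹ * γmin with hεdef
  have hε0 : 0 ≤ ε := mul_nonneg hcinv hγmin.le
  have hstep : ∀ u v : Fin n → Fin a, hammingDist u v = 1 → ε ≤ R u v := by
    intro u v hd
    have huv : u ≠ v := by
      intro h; rw [h, hammingDist_self] at hd; exact one_ne_zero hd.symm
    rw [hoff u v huv, hεdef]
    exact mul_le_mul_of_nonneg_left (hQ1 u v hd).1 hcinv
  -- entries of powers are bounded by 1
  have hle1 : ∀ m : ℕ, (R ^ m) x y ≤ 1 := by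
    intro m
    calc (R ^ m) x y ≤ ∑ v, (R ^ m) x v :=
          Finset.single_le_sum (fun v _ => matpow_nonneg R hnn m x v) (Finset.mem_univ y)
      _ = 1 := matpow_rowsum R hrow m x
  -- the summand
  set f : ℕ → ℝ := fun m => if r ≤ m then (c * T) ^ m / (Nat.factorial m) * (R ^ m) x y else 0
    with hfdef
  have hfnn : ∀ m, 0 ≤ f m := by
    intro m
    simp only [hfdef]
    split
    · exact mul_nonneg (div_nonneg (pow_nonneg (mul_nonneg hc0 hT.le) m) (by positivity))
        (matpow_nonneg R hnn m x y)
    · exact le_refl 0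
  have hfub : ∀ m, f m ≤ (c * T) ^ m / (Nat.factorial m) := by
    intro m
    simp only [hfdef]
    split
    · calc (c * T) ^ m / (Nat.factorial m) * (R ^ m) x y
          ≤ (c * T) ^ m / (Nat.factorial m) * 1 :=
            mul_le_mul_of_nonneg_left (hle1 m)
              (div_nonneg (pow_nonneg (mul_nonneg hc0 hT.le) m) (by positivity))
        _ = (c * T) ^ m / (Nat.factorial m) := mul_one _
    · positivity
  have hsummable : Summable f :=
    Summable.of_nonneg_of_le hfnn hfub (Real.summable_pow_div_factorial (c * T))
  -- the key term bound
  have hkey : (T * γmin) ^ r ≤ f r := by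
    have hfr : f r = (c * T) ^ r / (Nat.factorial r) * (R ^ r) x y := by
      simp only [hfdef, le_refl, if_true]
    rcases Nat.eq_zero_or_pos r with hr0 | hrpos
    · have hd0 : hammingDist x y = 0 := by rw [← hrdef, hr0]
      have hxy : x = y := hammingDist_eq_zero.mp hd0
      rw [hfr, hr0, hxy]
      simp [Matrix.one_apply]
    · -- n > 0 hence c > 0
      have hxy : x ≠ y := hammingDist_pos.mp (hrdef ▸ hrpos)
      have hn : 0 < n := by
        by_contra hcon
        have h0 : n = 0 := by omega
        subst h0
        exact hxy (funext fun i => i.elim0)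
      have hcpos : 0 < c := by
        rw [hcdef]
        have h1 : (0 : ℝ) < (n : ℝ) := by exact_mod_cast hn
        have h2 : (0 : ℝ) < (a : ℝ) - 1 := by linarith
        exact mul_pos (mul_pos h1 h2) hlam0
      have hlow := pow_entry_lower R hnn ε hε0 hstep r x y hrdef.symm
      have h5 : (c * T) ^ r / (Nat.factorial r) * ((r.factorial : ℝ) * ε ^ r)
          ≤ (c * T) ^ r / (Nat.factorial r) * (R ^ r) x y :=
        mul_le_mul_of_nonneg_left hlow
          (div_nonneg (pow_nonneg (mul_nonneg hc0 hT.le) r) (by positivity))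
      have h6 : (c * T) ^ r / (Nat.factorial r) * ((r.factorial : ℝ) * ε ^ r)
          = (T * γmin) ^ r := by
        have hfac : (r.factorial : ℝ) ≠ 0 := by positivity
        have hcε : c * T * ε = T * γmin := by
          rw [hεdef]
          field_simp
        rw [div_mul_eq_mul_div, mul_comm ((r.factorial : ℝ)) (ε ^ r), ← mul_assoc,
          ← mul_pow, hcε]
        field_simp
      rw [hfr, ← h6]
      exact h5
  have hmain : (T * γmin) ^ r ≤ ∑' m, f m :=
    le_trans hkey (Summable.le_tsum hsummable r (fun j _ => hfnn j))
  have hpart2 : Real.exp (-(c * T)) * (T * γmin) ^ r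
      ≤ Real.exp (-(c * T)) * ∑' m, f m :=
    mul_le_mul_of_nonneg_left hmain (Real.exp_pos _).le
  constructor
  · have hexp : Real.exp (-(c * T) + (r : ℝ) * Real.log (T * γmin))
        = Real.exp (-(c * T)) * (T * γmin) ^ r := by
      rw [Real.exp_add, Real.exp_nat_mul, Real.exp_log (mul_pos hT hγmin)]
    rw [hexp]
    exact hpart2
  · exact hpart2
end

section
/- Poisson lower-tail bound for the uniformized series (Lemma 2): For all reals λ_R > 0 and 0 < t ≤ T, the truncated exponential series satisfies e^{−λ_R T} · Σ_{m=0}^{⌊λ_R t/2⌋} (λ_R T)^m / m! ≤ e^{−λ_R t / 8}. -/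
/-- **Poisson lower-tail bound for the uniformized series (Lemma 2).**
For `0 < t ≤ T`, `e^{−λ_R T} Σ_{m=0}^{⌊λ_R t/2⌋} (λ_R T)^m/m! ≤ e^{−λ_R t/8}`. -/
theorem poisson_lower_tail_bound
    (lamR t T : ℝ) (hlamR : 0 < lamR) (ht : 0 < t) (htT : t ≤ T) :
    Real.exp (-(lamR * T)) *
        ∑ m ∈ Finset.range (⌊lamR * t / 2⌋₊ + 1), (lamR * T) ^ m / (Nat.factorial m)
      ≤ Real.exp (-(lamR * t / 8)) := by
  set μ := lamR * T with hμdef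
  set a := lamR * t with hadef
  have ha0 : 0 < a := mul_pos hlamR ht
  have hμa : a ≤ μ := mul_le_mul_of_nonneg_left htT hlamR.le
  have hμ0 : 0 < μ := lt_of_lt_of_le ha0 hμa
  set k := ⌊a / 2⌋₊ with hkdef
  have hk_le : (k : ℝ) ≤ a / 2 := Nat.floor_le (by positivity)
  have hsum : ∑ m ∈ Finset.range (k + 1), μ ^ m / (Nat.factorial m)
      ≤ (2 : ℝ) ^ k * Real.exp (μ / 2) := by
    calc ∑ m ∈ Finset.range (k + 1), μ ^ m / (Nat.factorial m)
        ≤ ∑ m ∈ Finset.range (k + 1), (2 : ℝ) ^ k * ((μ / 2) ^ m / (Nat.factorial m)) := by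
          apply Finset.sum_le_sum
          intro m hm
          have hm' : m ≤ k := Nat.lt_succ_iff.mp (Finset.mem_range.mp hm)
          have h1 : μ ^ m = (2 : ℝ) ^ m * (μ / 2) ^ m := by
            rw [← mul_pow]; ring_nf
          rw [h1, mul_div_assoc]
          apply mul_le_mul_of_nonneg_right
          · exact pow_le_pow_right₀ (by norm_num) hm'
          · positivity
      _ = (2 : ℝ) ^ k * ∑ m ∈ Finset.range (k + 1), (μ / 2) ^ m / (Nat.factorial m) := by
          rw [Finset.mul_sum]
      _ ≤ (2 : ℝ) ^ k * Real.exp (μ / 2) := by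
          apply mul_le_mul_of_nonneg_left _ (by positivity)
          exact Real.sum_le_exp_of_nonneg (by positivity) _
  calc Real.exp (-μ) * ∑ m ∈ Finset.range (k + 1), μ ^ m / (Nat.factorial m)
      ≤ Real.exp (-μ) * ((2 : ℝ) ^ k * Real.exp (μ / 2)) := by
        exact mul_le_mul_of_nonneg_left hsum (Real.exp_pos _).le
    _ = Real.exp (Real.log 2 * (k : ℝ) + (μ / 2 - μ)) := by
        rw [Real.exp_add, Real.exp_sub, ← Real.rpow_natCast 2 k,
          Real.rpow_def_of_pos (by norm_num), Real.exp_neg]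
        ring
    _ ≤ Real.exp (-(a / 8)) := by
        apply Real.exp_le_exp.mpr
        have hlog : Real.log 2 ≤ 3 / 4 := by
          have := Real.log_two_lt_d9
          linarith
        have h1 : Real.log 2 * (k : ℝ) ≤ (3 / 4) * (a / 2) := by
          apply mul_le_mul hlog hk_le (by positivity) (by norm_num)
        linarith
end

section
/- Stochastic dominance by a birth-death chain (Lemma 3): Let A be a finite alphabet with |A| = a ≥ 2, q = a−1, 0 < γmin ≤ γmax, λ ≥ max(γmax, γmin + γmax/q), and let Q̃ be a rate matrix on A^n whose off-diagonal entries vanish when d_H(u,v) > 1, lie in [γmin, γmax] when d_H(u,v) = 1, and whose rows sum to zero; set R̃ = I + Q̃/(nqλ). Let (X_m)_{m≥0} be the Markov chain with transition matrix R̃ started at X₀ = x, and let (Ȳ_m)_{m≥0} be the birth-death Markov chain on {0,...,n} started at Ȳ₀ = 0 with transition matrix B given by B_{i,i−1} = γmax·i/(nqλ), B_{i,i+1} = (γmin/λ)(1 − i/n), B_{i,i} = 1 − B_{i,i−1} − B_{i,i+1}, all other entries 0. Then for every m ≥ 0 and every integer r, P(d_H(X_m, x) ≤ r) ≤ P(Ȳ_m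 ≤ r); in particular, for any y with d_H(x,y) = r, (R̃^m)_{x,y} ≤ P(Ȳ_m ≤ r). -/
/-- The birth-death transition matrix `B` on `{0,…,n}` with
`B_{i,i−1} = γmax·i/(nqλ)`, `B_{i,i+1} = (γmin/λ)(1 − i/n)` and
`B_{i,i} = 1 − B_{i,i−1} − B_{i,i+1}`. -/
noncomputable def bdMatrix (n q : ℕ) (γmin γmax lam : ℝ) :
    Matrix (Fin (n + 1)) (Fin (n + 1)) ℝ :=
  Matrix.of fun i j =>
    if (j : ℕ) + 1 = (i : ℕ) then γmax * (i : ℕ) / ((n : ℝ) * q * lam)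
    else if (i : ℕ) + 1 = (j : ℕ) then (γmin / lam) * (1 - (i : ℕ) / n)
    else if i = j then
      1 - γmax * (i : ℕ) / ((n : ℝ) * q * lam) - (γmin / lam) * (1 - (i : ℕ) / n)
    else 0

section SdbdAux
open Finset

open Finset in
noncomputable def sdbdDn (n q : ℕ) (γmax lam : ℝ) (k : ℕ) : ℝ := γmax * k / ((n:ℝ)*q*lam)
noncomputable def sdbdUp (n : ℕ) (γmin lam : ℝ) (k : ℕ) : ℝ := (γmin/lam) * (1 - (k:ℝ)/n)

section
variable {n q : ℕ} {γmin γmax lam : ℝ}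

lemma sdbd_B_apply (i j : Fin (n+1)) :
    bdMatrix n q γmin γmax lam i j
      = (if (j:ℕ)+1 = (i:ℕ) then sdbdDn n q γmax lam i else 0)
        + (if (i:ℕ)+1 = (j:ℕ) then sdbdUp n γmin lam i else 0)
        + (if i = j then 1 - sdbdDn n q γmax lam i - sdbdUp n γmin lam i else 0) := by
  simp only [bdMatrix, Matrix.of_apply, sdbdDn, sdbdUp, Fin.ext_iff]
  split_ifs <;> first | ring1 | (exfalso; omega)

lemma sdbd_B_down {i j : Fin (n+1)} (h : (j:ℕ)+1 = (i:ℕ)) :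
    bdMatrix n q γmin γmax lam i j = sdbdDn n q γmax lam i := by
  rw [sdbd_B_apply, if_pos h, if_neg (by omega), if_neg (by rw [Fin.ext_iff]; omega)]; ring

lemma sdbd_B_up {i j : Fin (n+1)} (h : (i:ℕ)+1 = (j:ℕ)) :
    bdMatrix n q γmin γmax lam i j = sdbdUp n γmin lam i := by
  rw [sdbd_B_apply, if_pos h, if_neg (by omega), if_neg (by rw [Fin.ext_iff]; omega)]; ring

lemma sdbd_B_diag (i : Fin (n+1)) :
    bdMatrix n q γmin γmax lam i i
      = 1 - sdbdDn n q γmax lam i - sdbdUp n γmin lam i := by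
  rw [sdbd_B_apply, if_pos rfl, if_neg (by omega), if_neg (by omega)]; ring

lemma sdbd_B_zero {i j : Fin (n+1)} (h1 : (j:ℕ)+1 ≠ (i:ℕ)) (h2 : (i:ℕ)+1 ≠ (j:ℕ))
    (h3 : (i:ℕ) ≠ (j:ℕ)) :
    bdMatrix n q γmin γmax lam i j = 0 := by
  rw [sdbd_B_apply, if_neg h1, if_neg h2, if_neg (by rw [Fin.ext_iff]; exact h3)]; ring

lemma sdbdDn_zero : sdbdDn n q γmax lam 0 = 0 := by simp [sdbdDn]
lemma sdbdUp_n (hn : 1 ≤ n) : sdbdUp n γmin lam n = 0 := by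
  have : ((n:ℝ))/n = 1 := div_self (by positivity)
  simp [sdbdUp, this]

lemma sdbd_B_rowsum (hn : 1 ≤ n) (i : Fin (n+1)) :
    ∑ j, bdMatrix n q γmin γmax lam i j = 1 := by
  have hrw : ∀ j, bdMatrix n q γmin γmax lam i j
      = (if (j:ℕ)+1 = (i:ℕ) then sdbdDn n q γmax lam i else 0)
        + (if (i:ℕ)+1 = (j:ℕ) then sdbdUp n γmin lam i else 0)
        + (if i = j then 1 - sdbdDn n q γmax lam i - sdbdUp n γmin lam i else 0) :=
    fun j => sdbd_B_apply i j
  rw [Finset.sum_congr rfl (fun j _ => hrw j), Finset.sum_add_distrib, Finset.sum_add_distrib]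
  have S1 : ∑ j : Fin (n+1), (if (j:ℕ)+1 = (i:ℕ) then sdbdDn n q γmax lam i else 0)
      = sdbdDn n q γmax lam i := by
    rcases Nat.eq_zero_or_pos (i:ℕ) with h | h
    · rw [Finset.sum_eq_zero (fun j _ => if_neg (by omega))]
      rw [h, sdbdDn_zero]
    · rw [Finset.sum_eq_single_of_mem (⟨(i:ℕ)-1, by omega⟩ : Fin (n+1)) (Finset.mem_univ _)
        (fun b _ hb => if_neg (fun hc => hb (by rw [Fin.ext_iff]; simp; omega)))]
      rw [if_pos (by simp; omega)]
  have S2 : ∑ j : Fin (n+1), (if (i:ℕ)+1 = (j:ℕ) then sdbdUp n γmin lam i else 0)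
      = sdbdUp n γmin lam i := by
    rcases lt_or_ge (i:ℕ) n with h | h
    · rw [Finset.sum_eq_single_of_mem (⟨(i:ℕ)+1, by omega⟩ : Fin (n+1)) (Finset.mem_univ _)
        (fun b _ hb => if_neg (fun hc => hb (by rw [Fin.ext_iff]; simp; omega)))]
      rw [if_pos (by simp)]
    · have hi : (i:ℕ) = n := by omega
      rw [Finset.sum_eq_zero (fun j _ => if_neg (by have := j.isLt; omega))]
      rw [hi, sdbdUp_n hn]
  have S3 : ∑ j : Fin (n+1), (if i = j then 1 - sdbdDn n q γmax lam i - sdbdUp n γmin lam i else 0)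
      = 1 - sdbdDn n q γmax lam i - sdbdUp n γmin lam i := by
    rw [Finset.sum_eq_single_of_mem i (Finset.mem_univ _)
      (fun b _ hb => if_neg (fun hc => hb hc.symm)), if_pos rfl]
  rw [S1, S2, S3]; ring
end

section
variable {n q : ℕ} {γmin γmax lam : ℝ}

lemma sdbd_arith (hn : 1 ≤ n) (hq : 1 ≤ q) (hlam : 0 < lam)
    (hγmax0 : 0 ≤ γmax) (hγmin0 : 0 ≤ γmin) (hl2 : γmin + γmax/(q:ℝ) ≤ lam)
    (K t : ℝ) (hK0 : 0 ≤ K) (hKn : K ≤ n) (ht0 : 0 ≤ t) (ht1 : t ≤ 1) :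
    γmax * K / ((n:ℝ)*q*lam) + (γmin/lam)*t ≤ 1 := by
  have hn' : (0:ℝ) < n := by exact_mod_cast hn
  have hq' : (0:ℝ) < q := by exact_mod_cast hq
  have h1 : γmax * K / ((n:ℝ)*q*lam) ≤ γmax/((q:ℝ)*lam) := by
    rw [div_le_div_iff₀ (by positivity) (by positivity)]
    have : γmax * K ≤ γmax * n := mul_le_mul_of_nonneg_left hKn hγmax0
    nlinarith [mul_pos hq' hlam]
  have h2 : (γmin/lam)*t ≤ γmin/lam :=
    mul_le_of_le_one_right (by positivity) ht1
  have h3 : γmax/((q:ℝ)*lam) + γmin/lam ≤ 1 := by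
    rw [← div_div, ← add_div, div_le_one hlam]
    linarith
  linarith

lemma sdbd_B_nonneg (hn : 1 ≤ n) (hq : 1 ≤ q) (hγmin : 0 < γmin) (hγ : γmin ≤ γmax)
    (hl1 : γmax ≤ lam) (hl2 : γmin + γmax/(q:ℝ) ≤ lam) (i j : Fin (n+1)) :
    0 ≤ bdMatrix n q γmin γmax lam i j := by
  have hlam : 0 < lam := lt_of_lt_of_le (lt_of_lt_of_le hγmin hγ) hl1
  have hn' : (0:ℝ) < n := by exact_mod_cast hn
  have hq' : (0:ℝ) < q := by exact_mod_cast hq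
  have hγmax : 0 < γmax := lt_of_lt_of_le hγmin hγ
  have hdn : 0 ≤ sdbdDn n q γmax lam i := by
    unfold sdbdDn
    exact div_nonneg (mul_nonneg hγmax.le (by positivity)) (by positivity)
  have hup : 0 ≤ sdbdUp n γmin lam i := by
    unfold sdbdUp
    have : ((i:ℕ):ℝ) ≤ n := by exact_mod_cast Nat.lt_succ_iff.mp i.isLt
    have h1 : ((i:ℕ):ℝ)/n ≤ 1 := by rw [div_le_one hn']; exact this
    have h2 : (0:ℝ) ≤ 1 - ((i:ℕ):ℝ)/n := by linarith
    exact mul_nonneg (div_nonneg hγmin.le hlam.le) h2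
  rw [sdbd_B_apply]
  have hdiag : 0 ≤ 1 - sdbdDn n q γmax lam i - sdbdUp n γmin lam i := by
    have := sdbd_arith hn hq hlam (le_trans hγmin.le hγ) hγmin.le hl2
      ((i:ℕ):ℝ) (1 - ((i:ℕ):ℝ)/n) (by positivity)
      (by exact_mod_cast Nat.lt_succ_iff.mp i.isLt)
      (by
        have : ((i:ℕ):ℝ)/n ≤ 1 := by
          rw [div_le_one hn']; exact_mod_cast Nat.lt_succ_iff.mp i.isLt
        linarith)
      (by
        have : (0:ℝ) ≤ ((i:ℕ):ℝ)/n := by positivity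
        linarith)
    unfold sdbdDn sdbdUp
    linarith
  split_ifs <;> simp_all <;> linarith

lemma sdbd_T_ge (hn : 1 ≤ n) {i : Fin (n+1)} {r : ℕ} (h : (i:ℕ)+1 ≤ r) :
    ∑ j ∈ Finset.univ.filter (fun j : Fin (n+1) => (j:ℕ) ≤ r),
      bdMatrix n q γmin γmax lam i j = 1 := by
  rw [← sdbd_B_rowsum hn i]
  refine Finset.sum_subset (Finset.filter_subset _ _) (fun j _ hj => ?_)
  simp only [Finset.mem_filter, Finset.mem_univ, true_and, not_le] at hj
  exact sdbd_B_zero (by omega) (by omega) (by omega)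

lemma sdbd_T_eq (hn : 1 ≤ n) {i : Fin (n+1)} {r : ℕ} (h : (i:ℕ) = r) :
    ∑ j ∈ Finset.univ.filter (fun j : Fin (n+1) => (j:ℕ) ≤ r),
      bdMatrix n q γmin γmax lam i j = 1 - sdbdUp n γmin lam i := by
  have hsplit := Finset.sum_filter_add_sum_filter_not Finset.univ
    (fun j : Fin (n+1) => (j:ℕ) ≤ r) (bdMatrix n q γmin γmax lam i)
  rw [sdbd_B_rowsum hn i] at hsplit
  have hrest : ∑ j ∈ Finset.univ.filter (fun j : Fin (n+1) => ¬(j:ℕ) ≤ r),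
      bdMatrix n q γmin γmax lam i j = sdbdUp n γmin lam i := by
    rcases lt_or_ge (i:ℕ) n with hlt | hge
    · rw [Finset.sum_eq_single_of_mem (⟨(i:ℕ)+1, by omega⟩ : Fin (n+1))
        (by simp; omega)
        (fun b hb hbne => ?_)]
      · exact sdbd_B_up (by simp)
      · simp only [Finset.mem_filter, Finset.mem_univ, true_and, not_le] at hb
        refine sdbd_B_zero (by omega) (fun hc => hbne ?_) (by omega)
        rw [Fin.ext_iff]; simp; omega
    · have hi : (i:ℕ) = n := by omega
      rw [Finset.sum_eq_zero (fun j hj => ?_), hi, sdbdUp_n hn]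
      simp only [Finset.mem_filter, Finset.mem_univ, true_and, not_le] at hj
      have := j.isLt; omega
  rw [hrest] at hsplit
  linarith

lemma sdbd_T_down {i : Fin (n+1)} {r : ℕ} (h : r+1 = (i:ℕ)) :
    ∑ j ∈ Finset.univ.filter (fun j : Fin (n+1) => (j:ℕ) ≤ r),
      bdMatrix n q γmin γmax lam i j = sdbdDn n q γmax lam i := by
  have hi := i.isLt
  rw [Finset.sum_eq_single_of_mem (⟨r, by omega⟩ : Fin (n+1)) (by simp)
    (fun b hb hbne => ?_)]
  · exact sdbd_B_down (by simp; omega)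
  · simp only [Finset.mem_filter, Finset.mem_univ, true_and] at hb
    refine sdbd_B_zero (fun hc => hbne ?_) (by omega) (by omega)
    rw [Fin.ext_iff]; simp; omega

lemma sdbd_T_zero {i : Fin (n+1)} {r : ℕ} (h : r+2 ≤ (i:ℕ)) :
    ∑ j ∈ Finset.univ.filter (fun j : Fin (n+1) => (j:ℕ) ≤ r),
      bdMatrix n q γmin γmax lam i j = 0 := by
  refine Finset.sum_eq_zero (fun j hj => ?_)
  simp only [Finset.mem_filter, Finset.mem_univ, true_and] at hj
  exact sdbd_B_zero (by omega) (by omega) (by omega)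

lemma sdbd_T_mono (hn : 1 ≤ n) (hq : 1 ≤ q) (hγmin : 0 < γmin) (hγ : γmin ≤ γmax)
    (hl1 : γmax ≤ lam) (hl2 : γmin + γmax/(q:ℝ) ≤ lam) (r k : ℕ) (hk : k+1 ≤ n) :
    ∑ j ∈ Finset.univ.filter (fun j : Fin (n+1) => (j:ℕ) ≤ r),
      bdMatrix n q γmin γmax lam ⟨k+1, by omega⟩ j
    ≤ ∑ j ∈ Finset.univ.filter (fun j : Fin (n+1) => (j:ℕ) ≤ r),
      bdMatrix n q γmin γmax lam ⟨k, by omega⟩ j := by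
  have hlam : 0 < lam := lt_of_lt_of_le (lt_of_lt_of_le hγmin hγ) hl1
  have hn' : (0:ℝ) < n := by exact_mod_cast hn
  have hq' : (0:ℝ) < q := by exact_mod_cast hq
  have hupnn : ∀ m : ℕ, m ≤ n → 0 ≤ sdbdUp n γmin lam m := by
    intro m hm
    unfold sdbdUp
    have h1 : ((m:ℕ):ℝ)/n ≤ 1 := by
      rw [div_le_one hn']; exact_mod_cast hm
    have h2 : (0:ℝ) ≤ 1 - (m:ℝ)/n := by linarith
    exact mul_nonneg (div_nonneg hγmin.le hlam.le) h2
  rcases Nat.lt_or_ge (k+1) r with h1 | h1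
  · -- r ≥ k+2
    rw [sdbd_T_ge hn (by simp; omega), sdbd_T_ge hn (by simp; omega)]
  · rcases Nat.eq_or_lt_of_le h1 with h2 | h2
    · -- r = k+1
      rw [sdbd_T_eq hn (by simp; omega), sdbd_T_ge hn (by simp; omega)]
      have := hupnn (k+1) hk
      simp only [Fin.val_mk]
      linarith
    · rcases Nat.eq_or_lt_of_le (Nat.lt_succ_iff.mp h2) with h3 | h3
      · -- r = k
        rw [sdbd_T_down (by simp; omega), sdbd_T_eq hn (by simp; omega)]
        simp only [Fin.val_mk]
        have harith := sdbd_arith hn hq hlam (le_trans hγmin.le hγ) hγmin.le hl2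
          ((k:ℝ)+1) (1 - (k:ℝ)/n) (by positivity)
          (by exact_mod_cast hk)
          (by
            have : ((k:ℕ):ℝ)/n ≤ 1 := by
              rw [div_le_one hn']; exact_mod_cast (by omega : k ≤ n)
            linarith)
          (by
            have : (0:ℝ) ≤ ((k:ℕ):ℝ)/n := by positivity
            linarith)
        unfold sdbdDn sdbdUp
        push_cast at harith ⊢
        linarith
      · -- r < k
        rw [sdbd_T_zero (by simp; omega)]
        refine Finset.sum_nonneg (fun j _ => sdbd_B_nonneg hn hq hγmin hγ hl1 hl2 _ j)
end


open Finset

/-- Abel-summation style bound. -/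
lemma sdbd_abel (δ T : ℕ → ℝ) : ∀ M : ℕ,
    (∀ r < M, 0 ≤ ∑ k ∈ Finset.range (r+1), δ k) →
    (∀ i, i+1 < M → T (i+1) ≤ T i) →
    (∑ k ∈ Finset.range M, δ k) * T (M-1) ≤ ∑ k ∈ Finset.range M, δ k * T k := by
  intro M
  induction M with
  | zero => simp
  | succ M ih =>
    intro hΔ hT
    have h1 : (∑ k ∈ Finset.range M, δ k) * T (M-1) ≤ ∑ k ∈ Finset.range M, δ k * T k :=
      ih (fun r hr => hΔ r (by omega)) (fun i hi => hT i (by omega))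
    have h2 : 0 ≤ ∑ k ∈ Finset.range M, δ k := by
      rcases Nat.eq_zero_or_pos M with h | h
      · simp [h]
      · have := hΔ (M-1) (by omega)
        rwa [Nat.sub_add_cancel h] at this
    have h3 : T M ≤ T (M-1) := by
      rcases Nat.eq_zero_or_pos M with h | h
      · simp [h]
      · have := hT (M-1) (by omega)
        rwa [Nat.sub_add_cancel h] at this
    rw [Finset.sum_range_succ, Finset.sum_range_succ, add_mul]
    have : (∑ k ∈ Finset.range M, δ k) * T (M+1-1) ≤ (∑ k ∈ Finset.range M, δ k) * T (M-1) := by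
      simp only [Nat.add_sub_cancel]
      exact mul_le_mul_of_nonneg_left h3 h2
    refine le_trans (add_le_add this le_rfl) ?_
    simp only [Nat.add_sub_cancel]
    exact add_le_add h1 le_rfl

lemma sdbd_pow_nonneg {ι : Type*} [Fintype ι] [DecidableEq ι] (M : Matrix ι ι ℝ)
    (h : ∀ i j, 0 ≤ M i j) (m : ℕ) : ∀ i j, 0 ≤ (M^m) i j := by
  induction m with
  | zero => intro i j; rw [pow_zero, Matrix.one_apply]; split <;> norm_num
  | succ m ih =>
    intro i j
    rw [pow_succ, Matrix.mul_apply]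
    exact Finset.sum_nonneg fun k _ => mul_nonneg (ih i k) (h k j)

lemma sdbd_pow_rowsum {ι : Type*} [Fintype ι] [DecidableEq ι] (M : Matrix ι ι ℝ)
    (h : ∀ i, ∑ j, M i j = 1) (m : ℕ) : ∀ i, ∑ j, (M^m) i j = 1 := by
  induction m with
  | zero => intro i; simp [Matrix.one_apply]
  | succ m ih =>
    intro i
    simp only [pow_succ, Matrix.mul_apply]
    rw [Finset.sum_comm]
    calc ∑ k, ∑ j, (M^m) i k * M k j = ∑ k, (M^m) i k * ∑ j, M k j := by
          simp [Finset.mul_sum]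
      _ = 1 := by simp only [h, mul_one]; exact ih i

open Finset Function

section
variable {a n : ℕ}

lemma sdbd_filter_update (w x : Fin n → Fin a) (i : Fin n) (b : Fin a) :
    (Finset.univ.filter fun j => Function.update w i b j ≠ x j)
      = if b = x i then (Finset.univ.filter fun j => w j ≠ x j).erase i
        else insert i ((Finset.univ.filter fun j => w j ≠ x j).erase i) := by
  ext j
  by_cases hj : j = i
  · subst hj
    by_cases hb : b = x j <;> simp [hb, Function.update_self]
  · by_cases hb : b = x i <;>
      simp [Function.update_of_ne hj, hj, hb]

lemma sdbd_hd_down (w x : Fin n → Fin a) (i : Fin n) (h : w i ≠ x i) :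
    hammingDist (Function.update w i (x i)) x + 1 = hammingDist w x := by
  have hm : i ∈ (Finset.univ.filter fun j => w j ≠ x j) := by simp [h]
  rw [hammingDist, hammingDist, sdbd_filter_update, if_pos rfl, card_erase_of_mem hm]
  have : 1 ≤ #(Finset.univ.filter fun j => w j ≠ x j) := card_pos.2 ⟨i, hm⟩
  omega

lemma sdbd_hd_same (w x : Fin n → Fin a) (i : Fin n) (b : Fin a) (h : w i ≠ x i) (hb : b ≠ x i) :
    hammingDist (Function.update w i b) x = hammingDist w x := by
  have hm : i ∈ (Finset.univ.filter fun j => w j ≠ x j) := by simp [h]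
  rw [hammingDist, hammingDist, sdbd_filter_update, if_neg hb, insert_erase hm]

lemma sdbd_hd_up (w x : Fin n → Fin a) (i : Fin n) (b : Fin a) (h : w i = x i) (hb : b ≠ x i) :
    hammingDist (Function.update w i b) x = hammingDist w x + 1 := by
  have hm : i ∉ (Finset.univ.filter fun j => w j ≠ x j) := by simp [h]
  rw [hammingDist, hammingDist, sdbd_filter_update, if_neg hb, erase_eq_of_notMem hm,
    card_insert_of_notMem hm]

lemma sdbd_hd_self (w : Fin n → Fin a) (i : Fin n) (b : Fin a) (hb : b ≠ w i) :
    hammingDist (Function.update w i b) w = 1 := by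
  have := sdbd_hd_up w w i b rfl hb
  simpa using this

lemma sdbd_update_ne (w : Fin n → Fin a) (i : Fin n) (b : Fin a) (hb : b ≠ w i) :
    Function.update w i b ≠ w := by
  intro h
  apply hb
  rw [← congrFun h i, Function.update_self]

lemma sdbd_dist_one (z w : Fin n → Fin a) (h : hammingDist z w = 1) :
    ∃ i, z i ≠ w i ∧ z = Function.update w i (z i) := by
  rw [hammingDist, card_eq_one] at h
  obtain ⟨i0, hi⟩ := h
  have hmem : ∀ j : Fin n, z j ≠ w j ↔ j = i0 := by
    intro j
    constructor
    · intro hj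
      have hjj : j ∈ (Finset.univ.filter fun i => z i ≠ w i) := by simp [hj]
      rw [hi] at hjj; simpa using hjj
    · rintro rfl
      have hjj : j ∈ ({j} : Finset (Fin n)) := by simp
      rw [← hi] at hjj; simpa using hjj
  refine ⟨i0, (hmem i0).2 rfl, funext fun j => ?_⟩
  by_cases hj : j = i0
  · subst hj; rw [Function.update_self]
  · rw [Function.update_of_ne hj]
    by_contra hne
    exact hj ((hmem j).1 hne)

/-- sum over a "neighbour block" biUnion. -/
lemma sdbd_sum_nbr (w : Fin n → Fin a) (I : Finset (Fin n)) (f : (Fin n → Fin a) → ℝ) :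
    ∑ z ∈ I.biUnion (fun i => (univ.erase (w i)).image (Function.update w i)), f z
      = ∑ i ∈ I, ∑ b ∈ univ.erase (w i), f (Function.update w i b) := by
  rw [Finset.sum_biUnion]
  · refine Finset.sum_congr rfl fun i _ => ?_
    refine Finset.sum_image fun b hb b' hb' hbb' => ?_
    have := congrFun hbb' i
    simpa using this
  · intro i _ i' _ hii'
    simp only [Function.onFun]
    rw [Finset.disjoint_left]
    intro z hz hz'
    simp only [Finset.mem_image, Finset.mem_erase, Finset.mem_univ, and_true] at hz hz'
    obtain ⟨b, hb, rfl⟩ := hz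
    obtain ⟨b', hb', he⟩ := hz'
    have hcon := congrFun he i
    rw [Function.update_self, Function.update_of_ne hii'] at hcon
    exact hb hcon.symm

lemma sdbd_mem_nbr (w z : Fin n → Fin a) (h : hammingDist z w = 1) :
    z ∈ Finset.univ.biUnion (fun i => (univ.erase (w i)).image (Function.update w i)) := by
  obtain ⟨i, hi, hz⟩ := sdbd_dist_one z w h
  simp only [Finset.mem_biUnion, Finset.mem_univ, Finset.mem_image, Finset.mem_erase, and_true]
  exact ⟨i, trivial, z i, hi, hz.symm⟩

lemma sdbd_nbr_card (w : Fin n → Fin a) :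
    #(Finset.univ.filter fun v => hammingDist v w = 1) ≤ n * (a - 1) := by
  have hsub : (Finset.univ.filter fun v => hammingDist v w = 1)
      ⊆ Finset.univ.biUnion (fun i => (univ.erase (w i)).image (Function.update w i)) := by
    intro z hz
    simp only [Finset.mem_filter] at hz
    exact sdbd_mem_nbr w z hz.2
  refine le_trans (Finset.card_le_card hsub) (le_trans Finset.card_biUnion_le ?_)
  calc ∑ i : Fin n, #((univ.erase (w i)).image (Function.update w i))
      ≤ ∑ i : Fin n, (a-1) := by
        refine Finset.sum_le_sum fun i _ => ?_
        refine le_trans Finset.card_image_le ?_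
        rw [Finset.card_erase_of_mem (Finset.mem_univ _)]
        simp
    _ = n * (a-1) := by simp [mul_comm]

end

section
open Finset Function
variable {a n : ℕ} {γmin γmax lam : ℝ} {Q : Matrix (Fin n → Fin a) (Fin n → Fin a) ℝ}

lemma sdbd_hd_le_n (w x : Fin n → Fin a) : hammingDist w x ≤ n := by
  have := hammingDist_le_card_fintype (x := w) (y := x)
  simpa using this

lemma sdbd_R_apply (c : ℝ) (w z : Fin n → Fin a) :
    (1 + c⁻¹ • Q) w z = (if w = z then 1 else 0) + c⁻¹ * Q w z := by
  simp [Matrix.add_apply, Matrix.one_apply, Matrix.smul_apply, smul_eq_mul]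

lemma sdbd_Q_od_nonneg (hγmin : 0 < γmin)
    (hQ1 : ∀ u v : Fin n → Fin a, hammingDist u v = 1 → Q u v ∈ Set.Icc γmin γmax)
    (hQ2 : ∀ u v : Fin n → Fin a, u ≠ v → hammingDist u v ≠ 1 → Q u v = 0)
    (w z : Fin n → Fin a) (h : w ≠ z) : 0 ≤ Q w z := by
  by_cases hd : hammingDist w z = 1
  · exact le_trans hγmin.le (hQ1 w z hd).1
  · rw [hQ2 w z h hd]

lemma sdbd_Q_bound (hγmin : 0 < γmin) (hγ : γmin ≤ γmax)
    (hQ1 : ∀ u v : Fin n → Fin a, hammingDist u v = 1 → Q u v ∈ Set.Icc γmin γmax)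
    (hQ2 : ∀ u v : Fin n → Fin a, u ≠ v → hammingDist u v ≠ 1 → Q u v = 0)
    (w : Fin n → Fin a) :
    ∑ v ∈ Finset.univ.erase w, Q w v ≤ ((n * (a-1) : ℕ) : ℝ) * γmax := by
  have hγmax : 0 ≤ γmax := le_trans hγmin.le hγ
  calc ∑ v ∈ Finset.univ.erase w, Q w v
      ≤ ∑ v ∈ Finset.univ.erase w, (if hammingDist v w = 1 then γmax else 0) := by
        refine Finset.sum_le_sum fun v hv => ?_
        have hvw : v ≠ w := (Finset.mem_erase.mp hv).1
        by_cases hd : hammingDist v w = 1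
        · rw [if_pos hd]
          exact (hQ1 w v (by rwa [hammingDist_comm])).2
        · rw [if_neg hd, hQ2 w v hvw.symm (by rwa [hammingDist_comm])]
    _ = ∑ v ∈ (Finset.univ.erase w).filter (fun v => hammingDist v w = 1), γmax := by
        rw [Finset.sum_filter]
    _ = #((Finset.univ.erase w).filter (fun v => hammingDist v w = 1)) * γmax := by
        rw [Finset.sum_const, nsmul_eq_mul]
    _ ≤ ((n * (a-1) : ℕ) : ℝ) * γmax := by
        refine mul_le_mul_of_nonneg_right ?_ hγmax
        have h1 : ((Finset.univ.erase w).filter (fun v => hammingDist v w = 1))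
            ⊆ (Finset.univ.filter (fun v => hammingDist v w = 1)) :=
          Finset.filter_subset_filter _ (Finset.erase_subset _ _)
        have := le_trans (Finset.card_le_card h1) (sdbd_nbr_card w)
        exact_mod_cast this

lemma sdbd_R_nonneg (hn : 1 ≤ n) (ha : 2 ≤ a) (hγmin : 0 < γmin) (hγ : γmin ≤ γmax)
    (hl1 : γmax ≤ lam)
    (hQ1 : ∀ u v : Fin n → Fin a, hammingDist u v = 1 → Q u v ∈ Set.Icc γmin γmax)
    (hQ2 : ∀ u v : Fin n → Fin a, u ≠ v → hammingDist u v ≠ 1 → Q u v = 0)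
    (hQ3 : ∀ u : Fin n → Fin a, ∑ v, Q u v = 0)
    (w z : Fin n → Fin a) :
    0 ≤ (1 + (((n : ℝ) * ((a - 1 : ℕ) : ℝ) * lam))⁻¹ • Q) w z := by
  have hlam : 0 < lam := lt_of_lt_of_le (lt_of_lt_of_le hγmin hγ) hl1
  have hn' : (0:ℝ) < n := by exact_mod_cast hn
  have hq' : (0:ℝ) < ((a-1:ℕ):ℝ) := by exact_mod_cast (by omega : 1 ≤ a - 1)
  set c : ℝ := (n : ℝ) * ((a - 1 : ℕ) : ℝ) * lam with hc
  have hcpos : 0 < c := by positivity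
  rw [sdbd_R_apply]
  by_cases hwz : w = z
  · subst hwz
    rw [if_pos rfl]
    have hdiag : Q w w = - ∑ v ∈ Finset.univ.erase w, Q w v := by
      have h0 := hQ3 w
      rw [← Finset.sum_erase_add Finset.univ _ (Finset.mem_univ w)] at h0
      linarith
    have hb := sdbd_Q_bound hγmin hγ hQ1 hQ2 w
    have h1 : - (c⁻¹ * (((n * (a-1) : ℕ) : ℝ) * γmax)) ≤ c⁻¹ * Q w w := by
      rw [hdiag, mul_neg]
      exact neg_le_neg (mul_le_mul_of_nonneg_left hb (inv_nonneg.mpr hcpos.le))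
    have haux : ∀ x y l g : ℝ, 0 < x → 0 < y → 0 < l → (x*y*l)⁻¹ * (x*y*g) = g / l := by
      intro x y l g hx hy hl; field_simp
    have h2 : c⁻¹ * (((n * (a-1) : ℕ) : ℝ) * γmax) = γmax / lam := by
      rw [Nat.cast_mul, hc]
      exact haux _ _ _ _ hn' hq' hlam
    have h3 : γmax / lam ≤ 1 := by
      rw [div_le_one hlam]; exact hl1
    rw [h2] at h1
    linarith
  · rw [if_neg hwz]
    have := sdbd_Q_od_nonneg hγmin hQ1 hQ2 w z hwz
    positivity

lemma sdbd_R_rowsum (hQ3 : ∀ u : Fin n → Fin a, ∑ v, Q u v = 0) (c : ℝ)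
    (w : Fin n → Fin a) :
    ∑ z, (1 + c⁻¹ • Q) w z = 1 := by
  have : ∀ z, (1 + c⁻¹ • Q) w z = (if w = z then 1 else 0) + c⁻¹ * Q w z :=
    fun z => sdbd_R_apply c w z
  rw [Finset.sum_congr rfl (fun z _ => this z), Finset.sum_add_distrib, ← Finset.mul_sum,
    hQ3 w, mul_zero, add_zero, Finset.sum_ite_eq Finset.univ w (fun _ => (1:ℝ))]
  simp

end

section
open Finset Function
variable {a n : ℕ} {γmin γmax lam : ℝ} {Q : Matrix (Fin n → Fin a) (Fin n → Fin a) ℝ}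

lemma sdbd_hd_card (w x : Fin n → Fin a) :
    hammingDist w x = #(Finset.univ.filter fun i => w i ≠ x i) := rfl

lemma sdbd_step (hn : 1 ≤ n) (ha : 2 ≤ a) (hγmin : 0 < γmin) (hγ : γmin ≤ γmax)
    (hl1 : γmax ≤ lam) (hl2 : γmin + γmax/((a-1:ℕ):ℝ) ≤ lam)
    (hQ1 : ∀ u v : Fin n → Fin a, hammingDist u v = 1 → Q u v ∈ Set.Icc γmin γmax)
    (hQ2 : ∀ u v : Fin n → Fin a, u ≠ v → hammingDist u v ≠ 1 → Q u v = 0)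
    (hQ3 : ∀ u : Fin n → Fin a, ∑ v, Q u v = 0)
    (x w : Fin n → Fin a) (r : ℕ) :
    ∑ z ∈ Finset.univ.filter (fun z => hammingDist z x ≤ r),
        (1 + (((n : ℝ) * ((a - 1 : ℕ) : ℝ) * lam))⁻¹ • Q) w z
      ≤ ∑ j ∈ Finset.univ.filter (fun j : Fin (n+1) => (j:ℕ) ≤ r),
          bdMatrix n (a-1) γmin γmax lam
            ⟨hammingDist w x, Nat.lt_succ_of_le (sdbd_hd_le_n w x)⟩ j := by
  have hlam : 0 < lam := lt_of_lt_of_le (lt_of_lt_of_le hγmin hγ) hl1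
  have hn' : (0:ℝ) < n := by exact_mod_cast hn
  have hq1 : 1 ≤ a - 1 := by omega
  have hq' : (0:ℝ) < ((a-1:ℕ):ℝ) := by exact_mod_cast hq1
  set c : ℝ := (n : ℝ) * ((a - 1 : ℕ) : ℝ) * lam with hc
  have hcpos : 0 < c := by positivity
  set k := hammingDist w x with hk
  have hkn : k ≤ n := sdbd_hd_le_n w x
  have hRnn : ∀ z, 0 ≤ (1 + c⁻¹ • Q) w z :=
    fun z => sdbd_R_nonneg hn ha hγmin hγ hl1 hQ1 hQ2 hQ3 w z
  by_cases case1 : k + 1 ≤ r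
  · calc ∑ z ∈ Finset.univ.filter (fun z => hammingDist z x ≤ r), (1 + c⁻¹ • Q) w z
        ≤ ∑ z, (1 + c⁻¹ • Q) w z :=
          Finset.sum_le_sum_of_subset_of_nonneg (Finset.filter_subset _ _)
            (fun z _ _ => hRnn z)
      _ = 1 := sdbd_R_rowsum hQ3 c w
      _ = _ := (sdbd_T_ge hn (by simp only [Fin.val_mk]; omega)).symm
  · by_cases case2 : r = k
    · -- r = k
      have hTval := sdbd_T_eq (n := n) (q := a-1) (γmin := γmin) (γmax := γmax) (lam := lam) hn
        (i := ⟨k, Nat.lt_succ_of_le hkn⟩) (r := r) (by simp only [Fin.val_mk]; omega)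
      have hsplit := Finset.sum_filter_add_sum_filter_not Finset.univ
        (fun z => hammingDist z x ≤ r) ((1 + c⁻¹ • Q) w)
      rw [sdbd_R_rowsum hQ3 c w] at hsplit
      set I := Finset.univ.filter (fun i : Fin n => w i = x i) with hI
      have hcardI : #I = n - k := by
        have he : I = Finset.univ \ (Finset.univ.filter (fun i => w i ≠ x i)) := by
          rw [hI, ← Finset.filter_not]
          ext i; simp
        rw [he, Finset.card_sdiff_of_subset (Finset.filter_subset _ _), ← sdbd_hd_card w x, ← hk]
        simp
      have hkey : (γmin/lam) * (1 - (k:ℝ)/n)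
          ≤ ∑ z ∈ Finset.univ.filter (fun z => ¬ hammingDist z x ≤ r), (1 + c⁻¹ • Q) w z := by
        set U := I.biUnion (fun i => (Finset.univ.erase (w i)).image (Function.update w i))
          with hU
        have hUsub : U ⊆ Finset.univ.filter (fun z => ¬ hammingDist z x ≤ r) := by
          intro z hz
          rw [hU] at hz
          simp only [Finset.mem_biUnion, Finset.mem_image, Finset.mem_erase,
            Finset.mem_univ, true_and, and_true] at hz
          obtain ⟨i, hiI, b, hb, rfl⟩ := hz
          have hwixi : w i = x i := by
            rw [hI] at hiI
            exact (Finset.mem_filter.mp hiI).2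
          have hbxi : b ≠ x i := by rw [← hwixi]; exact hb
          have hdz := sdbd_hd_up w x i b hwixi hbxi
          simp only [Finset.mem_filter, Finset.mem_univ, true_and, not_le]
          rw [hdz, ← hk]
          omega
        have h1 : ∑ z ∈ U, (1 + c⁻¹ • Q) w z
            = ∑ i ∈ I, ∑ b ∈ Finset.univ.erase (w i), (1 + c⁻¹ • Q) w (Function.update w i b) :=
          sdbd_sum_nbr w I _
        have h2 : ∀ i ∈ I, ∀ b ∈ Finset.univ.erase (w i),
            γmin / c ≤ (1 + c⁻¹ • Q) w (Function.update w i b) := by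
          intro i _ b hb
          have hbwi : b ≠ w i := (Finset.mem_erase.mp hb).1
          have hne : Function.update w i b ≠ w := sdbd_update_ne w i b hbwi
          have hd : hammingDist w (Function.update w i b) = 1 := by
            rw [hammingDist_comm]; exact sdbd_hd_self w i b hbwi
          rw [sdbd_R_apply, if_neg (fun h => hne h.symm), zero_add, div_eq_inv_mul]
          exact mul_le_mul_of_nonneg_left (hQ1 w _ hd).1 (inv_nonneg.mpr hcpos.le)
        have h3 : ((n:ℝ) - k) * ((a-1:ℕ):ℝ) * (γmin / c) ≤ ∑ z ∈ U, (1 + c⁻¹ • Q) w z := by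
          rw [h1]
          have hconst : ∑ i ∈ I, ∑ b ∈ Finset.univ.erase (w i), (γmin/c)
              = ((n:ℝ) - k) * ((a-1:ℕ):ℝ) * (γmin/c) := by
            have hinner : ∀ i : Fin n, ∑ _b ∈ Finset.univ.erase (w i), (γmin/c)
                = ((a-1:ℕ):ℝ) * (γmin/c) := by
              intro i
              rw [Finset.sum_const, Finset.card_erase_of_mem (Finset.mem_univ _), nsmul_eq_mul]
              simp
            rw [Finset.sum_congr rfl (fun i _ => hinner i), Finset.sum_const, hcardI,
              nsmul_eq_mul, Nat.cast_sub hkn]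
            ring
          rw [← hconst]
          exact Finset.sum_le_sum (fun i hi => Finset.sum_le_sum (fun b hb => h2 i hi b hb))
        have h4 : ∑ z ∈ U, (1 + c⁻¹ • Q) w z
            ≤ ∑ z ∈ Finset.univ.filter (fun z => ¬ hammingDist z x ≤ r), (1 + c⁻¹ • Q) w z :=
          Finset.sum_le_sum_of_subset_of_nonneg hUsub (fun z _ _ => hRnn z)
        have h5 : (γmin/lam) * (1 - (k:ℝ)/n) = ((n:ℝ) - k) * ((a-1:ℕ):ℝ) * (γmin/c) := by
          have hgen : ∀ qr : ℝ, 0 < qr →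
              (γmin/lam) * (1 - (k:ℝ)/n) = ((n:ℝ)-(k:ℝ)) * qr * (γmin/((n:ℝ)*qr*lam)) := by
            intro qr hqr
            field_simp
          rw [hc]
          exact hgen _ hq'
        rw [h5]
        linarith
      rw [hTval]
      have hupval : sdbdUp n γmin lam ((⟨k, Nat.lt_succ_of_le hkn⟩ : Fin (n+1)) : ℕ)
          = (γmin/lam) * (1 - (k:ℝ)/n) := rfl
      rw [hupval]
      linarith
    · by_cases case3 : r + 1 = k
      · -- r = k - 1
        set D := Finset.univ.filter (fun i : Fin n => w i ≠ x i) with hD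
        have hcardD : #D = k := (sdbd_hd_card w x).symm
        set img := D.image (fun i => Function.update w i (x i)) with himg
        have hinj : ∀ i ∈ D, ∀ i' ∈ D,
            Function.update w i (x i) = Function.update w i' (x i') → i = i' := by
          intro i hi i' _ he
          by_contra hne
          have h1 := congrFun he i
          rw [Function.update_self, Function.update_of_ne hne] at h1
          exact (Finset.mem_filter.mp hi).2 h1.symm
        have hzero : ∀ z ∈ Finset.univ.filter (fun z => hammingDist z x ≤ r), z ∉ img →
            (1 + c⁻¹ • Q) w z = 0 := by
          intro z hz hzimg
          have hdzx : hammingDist z x ≤ r := (Finset.mem_filter.mp hz).2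
          have hzw : z ≠ w := by
            intro h; rw [h, ← hk] at hdzx; omega
          rw [sdbd_R_apply, if_neg (fun h => hzw h.symm), zero_add]
          suffices hQz : Q w z = 0 by rw [hQz, mul_zero]
          by_cases hd : hammingDist w z = 1
          · exfalso
            obtain ⟨i, hi, hzu⟩ := sdbd_dist_one z w (by rwa [hammingDist_comm])
            by_cases hwx : w i = x i
            · have hup := sdbd_hd_up w x i (z i) hwx (by rw [← hwx]; exact hi)
              rw [← hzu, ← hk] at hup
              omega
            · by_cases hzx : z i = x i
              · apply hzimg
                rw [himg]
                refine Finset.mem_image.mpr ⟨i, ?_, ?_⟩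
                · rw [hD]; exact Finset.mem_filter.mpr ⟨Finset.mem_univ _, hwx⟩
                · rw [← hzx, ← hzu]
              · have hsame := sdbd_hd_same w x i (z i) hwx hzx
                rw [← hzu, ← hk] at hsame
                omega
          · exact hQ2 w z hzw.symm hd
        calc ∑ z ∈ Finset.univ.filter (fun z => hammingDist z x ≤ r), (1 + c⁻¹ • Q) w z
            = ∑ z ∈ (Finset.univ.filter (fun z => hammingDist z x ≤ r)) ∩ img,
                (1 + c⁻¹ • Q) w z := by
              refine (Finset.sum_subset Finset.inter_subset_left
                (fun z hz hz' => hzero z hz (fun him => hz' (Finset.mem_inter.mpr ⟨hz, him⟩)))).symm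
          _ ≤ ∑ z ∈ img, (1 + c⁻¹ • Q) w z :=
              Finset.sum_le_sum_of_subset_of_nonneg Finset.inter_subset_right
                (fun z _ _ => hRnn z)
          _ = ∑ i ∈ D, (1 + c⁻¹ • Q) w (Function.update w i (x i)) :=
              Finset.sum_image hinj
          _ ≤ ∑ i ∈ D, c⁻¹ * γmax := by
              refine Finset.sum_le_sum fun i hi => ?_
              have hwx : w i ≠ x i := (Finset.mem_filter.mp hi).2
              have hbwi : x i ≠ w i := fun h => hwx h.symm
              have hne := sdbd_update_ne w i (x i) hbwi
              have hd : hammingDist w (Function.update w i (x i)) = 1 := by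
                rw [hammingDist_comm]; exact sdbd_hd_self w i (x i) hbwi
              rw [sdbd_R_apply, if_neg (fun h => hne h.symm), zero_add]
              exact mul_le_mul_of_nonneg_left (hQ1 w _ hd).2 (inv_nonneg.mpr hcpos.le)
          _ = (k:ℝ) * (c⁻¹ * γmax) := by
              rw [Finset.sum_const, hcardD, nsmul_eq_mul]
          _ ≤ _ := by
              rw [sdbd_T_down (by simp only [Fin.val_mk]; omega)]
              have : sdbdDn n (a-1) γmax lam ((⟨k, Nat.lt_succ_of_le hkn⟩ : Fin (n+1)) : ℕ)
                  = γmax * (k:ℝ) / c := rfl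
              rw [this]
              rw [div_eq_mul_inv]
              ring_nf
              exact le_refl _
      · -- r + 2 ≤ k
        have hLHS : ∑ z ∈ Finset.univ.filter (fun z => hammingDist z x ≤ r),
            (1 + c⁻¹ • Q) w z = 0 := by
          refine Finset.sum_eq_zero fun z hz => ?_
          have hdzx : hammingDist z x ≤ r := (Finset.mem_filter.mp hz).2
          have hzw : z ≠ w := by
            intro h; rw [h, ← hk] at hdzx; omega
          rw [sdbd_R_apply, if_neg (fun h => hzw h.symm), zero_add]
          have hd : hammingDist w z ≠ 1 := by
            intro hd1
            have htri := hammingDist_triangle w z x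
            rw [hd1, ← hk] at htri
            omega
          rw [hQ2 w z hzw.symm hd, mul_zero]
        rw [hLHS]
        exact Finset.sum_nonneg fun j _ => sdbd_B_nonneg hn hq1 hγmin hγ hl1 hl2 _ j

end

noncomputable def sdbdT (n q : ℕ) (γmin γmax lam : ℝ) (r t : ℕ) : ℝ :=
  if h : t < n+1 then
    ∑ j ∈ Finset.univ.filter (fun j : Fin (n+1) => (j:ℕ) ≤ r),
      bdMatrix n q γmin γmax lam ⟨t, h⟩ j
  else 0

noncomputable def sdbdBeta (n q : ℕ) (γmin γmax lam : ℝ) (m t : ℕ) : ℝ :=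
  if h : t < n+1 then ((bdMatrix n q γmin γmax lam)^m) 0 ⟨t, h⟩ else 0

section
open Finset Function
variable {a n q : ℕ} {γmin γmax lam : ℝ}

lemma sdbdT_val (r : ℕ) (t : Fin (n+1)) :
    sdbdT n q γmin γmax lam r (t : ℕ)
      = ∑ j ∈ Finset.univ.filter (fun j : Fin (n+1) => (j:ℕ) ≤ r),
          bdMatrix n q γmin γmax lam t j := by
  rw [sdbdT, dif_pos t.isLt]

lemma sdbdBeta_val (m : ℕ) (t : Fin (n+1)) :
    sdbdBeta n q γmin γmax lam m (t : ℕ) = ((bdMatrix n q γmin γmax lam)^m) 0 t := by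
  rw [sdbdBeta, dif_pos t.isLt]

lemma sdbd_fiber (x : Fin n → Fin a) (f : (Fin n → Fin a) → ℝ) (N : ℕ) :
    ∑ t ∈ Finset.range N, ∑ w ∈ Finset.univ.filter (fun w => hammingDist w x = t), f w
      = ∑ w ∈ Finset.univ.filter (fun w => hammingDist w x < N), f w := by
  rw [← Finset.sum_fiberwise_of_maps_to (g := fun w => hammingDist w x)
    (t := Finset.range N) (s := Finset.univ.filter (fun w => hammingDist w x < N))
    (fun w hw => Finset.mem_range.mpr (Finset.mem_filter.mp hw).2) f]
  refine Finset.sum_congr rfl fun t ht => Finset.sum_congr ?_ (fun _ _ => rfl)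
  have htN := Finset.mem_range.mp ht
  ext w
  simp only [Finset.mem_filter, Finset.mem_univ, true_and]
  omega

lemma sdbd_beta_sum (m r' : ℕ) :
    ∑ t ∈ Finset.range (r'+1), sdbdBeta n q γmin γmax lam m t
      = ∑ j ∈ Finset.univ.filter (fun j : Fin (n+1) => (j:ℕ) ≤ r'),
          ((bdMatrix n q γmin γmax lam)^m) 0 j := by
  set g : ℕ → ℝ := fun t => if t ≤ r' then sdbdBeta n q γmin γmax lam m t else 0 with hg
  set M : ℕ := max (n+1) (r'+1) with hM
  have hA : ∑ j ∈ Finset.univ.filter (fun j : Fin (n+1) => (j:ℕ) ≤ r'),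
      ((bdMatrix n q γmin γmax lam)^m) 0 j = ∑ t ∈ Finset.range (n+1), g t := by
    rw [Finset.sum_filter, ← Fin.sum_univ_eq_sum_range g (n+1)]
    refine Finset.sum_congr rfl fun j _ => ?_
    rw [hg]
    simp only []
    rw [sdbdBeta_val m j]
  have h1 : ∑ t ∈ Finset.range (n+1), g t = ∑ t ∈ Finset.range M, g t := by
    refine Finset.sum_subset (Finset.range_subset_range.mpr (by omega)) (fun t _ ht => ?_)
    have htn : ¬ t < n+1 := by
      simp only [Finset.mem_range] at ht; omega
    rw [hg]
    simp only []
    rw [sdbdBeta, dif_neg htn]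
    simp
  have h2 : ∑ t ∈ Finset.range (r'+1), g t = ∑ t ∈ Finset.range M, g t := by
    refine Finset.sum_subset (Finset.range_subset_range.mpr (by omega)) (fun t _ ht => ?_)
    have htr : ¬ t ≤ r' := by
      simp only [Finset.mem_range] at ht; omega
    rw [hg]
    simp only []
    rw [if_neg htr]
  have h3 : ∑ t ∈ Finset.range (r'+1), sdbdBeta n q γmin γmax lam m t
      = ∑ t ∈ Finset.range (r'+1), g t := by
    refine Finset.sum_congr rfl fun t ht => ?_
    have := Finset.mem_range.mp ht
    rw [hg]
    simp only []
    rw [if_pos (by omega)]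
  rw [h3, h2, ← h1, ← hA]
end

end SdbdAux

/-- **Stochastic dominance by a birth-death chain (Lemma 3).**
For the chain `X` with transition matrix `R̃ = I + Q̃/(nqλ)` started at `x`, and the
birth-death chain `Ȳ` started at `0`, one has `P(d_H(X_m,x) ≤ r) ≤ P(Ȳ_m ≤ r)`;
in particular `(R̃^m)_{x,y} ≤ P(Ȳ_m ≤ r)` whenever `d_H(x,y) = r`. -/
theorem stochastic_dominance_birth_death
    (a n : ℕ) (ha : 2 ≤ a) (hn : 1 ≤ n)
    (γmin γmax lam : ℝ)
    (hγmin : 0 < γmin) (hγ : γmin ≤ γmax)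
    (hlam : max γmax (γmin + γmax / (((a - 1 : ℕ)) : ℝ)) ≤ lam)
    (Q : Matrix (Fin n → Fin a) (Fin n → Fin a) ℝ)
    (hQ1 : ∀ u v : Fin n → Fin a, hammingDist u v = 1 → Q u v ∈ Set.Icc γmin γmax)
    (hQ2 : ∀ u v : Fin n → Fin a, u ≠ v → hammingDist u v ≠ 1 → Q u v = 0)
    (hQ3 : ∀ u : Fin n → Fin a, ∑ v, Q u v = 0)
    (x : Fin n → Fin a) (m r : ℕ) :
    ((∑ z ∈ Finset.univ.filter (fun z : Fin n → Fin a => hammingDist z x ≤ r),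
        ((1 + (((n : ℝ) * ((a - 1 : ℕ) : ℝ) * lam))⁻¹ • Q) ^ m) x z)
      ≤ ∑ j ∈ Finset.univ.filter (fun j : Fin (n + 1) => (j : ℕ) ≤ r),
          ((bdMatrix n (a - 1) γmin γmax lam) ^ m) 0 j)
    ∧ (∀ y : Fin n → Fin a, hammingDist x y = r →
        ((1 + (((n : ℝ) * ((a - 1 : ℕ) : ℝ) * lam))⁻¹ • Q) ^ m) x y
          ≤ ∑ j ∈ Finset.univ.filter (fun j : Fin (n + 1) => (j : ℕ) ≤ r),
              ((bdMatrix n (a - 1) γmin γmax lam) ^ m) 0 j) := by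
  have hq1 : 1 ≤ a - 1 := by omega
  have hl1 : γmax ≤ lam := le_trans (le_max_left _ _) hlam
  have hl2 : γmin + γmax / (((a - 1 : ℕ)) : ℝ) ≤ lam := le_trans (le_max_right _ _) hlam
  have hRnn : ∀ w z : Fin n → Fin a, 0 ≤ (1 + (((n : ℝ) * ((a - 1 : ℕ) : ℝ) * lam))⁻¹ • Q) w z :=
    fun w z => sdbd_R_nonneg hn ha hγmin hγ hl1 hQ1 hQ2 hQ3 w z
  have hRpow : ∀ (m : ℕ) (w z : Fin n → Fin a), 0 ≤ ((1 + (((n : ℝ) * ((a - 1 : ℕ) : ℝ) * lam))⁻¹ • Q) ^ m) w z :=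
    fun m => sdbd_pow_nonneg _ hRnn m
  have hRrow : ∀ (m : ℕ) (w : Fin n → Fin a), ∑ z, ((1 + (((n : ℝ) * ((a - 1 : ℕ) : ℝ) * lam))⁻¹ • Q) ^ m) w z = 1 :=
    fun m => sdbd_pow_rowsum _ (fun w => sdbd_R_rowsum hQ3 _ w) m
  have hBnn : ∀ i j : Fin (n+1), 0 ≤ (bdMatrix n (a - 1) γmin γmax lam) i j :=
    sdbd_B_nonneg hn hq1 hγmin hγ hl1 hl2
  have hBrow : ∀ (m : ℕ) (i : Fin (n+1)), ∑ j, ((bdMatrix n (a - 1) γmin γmax lam) ^ m) i j = 1 :=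
    fun m => sdbd_pow_rowsum _ (sdbd_B_rowsum hn) m
  have key : ∀ m r : ℕ,
      (∑ z ∈ Finset.univ.filter (fun z : Fin n → Fin a => hammingDist z x ≤ r),
        ((1 + (((n : ℝ) * ((a - 1 : ℕ) : ℝ) * lam))⁻¹ • Q) ^ m) x z)
      ≤ ∑ j ∈ Finset.univ.filter (fun j : Fin (n + 1) => (j : ℕ) ≤ r),
          ((bdMatrix n (a - 1) γmin γmax lam) ^ m) 0 j := by
    intro m
    induction m with
    | zero =>
      intro r
      simp only [pow_zero]
      have hL : ∑ z ∈ Finset.univ.filter (fun z : Fin n → Fin a => hammingDist z x ≤ r),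
          (1 : Matrix (Fin n → Fin a) (Fin n → Fin a) ℝ) x z = 1 := by
        rw [Finset.sum_eq_single_of_mem x (by simp)
          (fun b _ hb => Matrix.one_apply_ne' hb), Matrix.one_apply_eq]
      have hRz : ∑ j ∈ Finset.univ.filter (fun j : Fin (n + 1) => (j : ℕ) ≤ r),
          (1 : Matrix (Fin (n+1)) (Fin (n+1)) ℝ) 0 j = 1 := by
        rw [Finset.sum_eq_single_of_mem 0 (by simp)
          (fun b _ hb => Matrix.one_apply_ne' hb), Matrix.one_apply_eq]
      rw [hL, hRz]
    | succ m ih =>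
      intro r
      have huniv : Finset.univ.filter (fun w : Fin n → Fin a => hammingDist w x < n+1)
          = Finset.univ :=
        Finset.filter_true_of_mem (fun w _ => Nat.lt_succ_of_le (sdbd_hd_le_n w x))
      have hstep : ∀ w : Fin n → Fin a,
          (∑ z ∈ Finset.univ.filter (fun z : Fin n → Fin a => hammingDist z x ≤ r), (1 + (((n : ℝ) * ((a - 1 : ℕ) : ℝ) * lam))⁻¹ • Q) w z)
          ≤ sdbdT n (a - 1) γmin γmax lam r (hammingDist w x) := by
        intro w
        have h := sdbd_step hn ha hγmin hγ hl1 hl2 hQ1 hQ2 hQ3 x w r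
        have hv := sdbdT_val (n := n) (q := a-1) (γmin := γmin) (γmax := γmax)
          (lam := lam) r ⟨hammingDist w x, Nat.lt_succ_of_le (sdbd_hd_le_n w x)⟩
        rw [show ((⟨hammingDist w x, Nat.lt_succ_of_le (sdbd_hd_le_n w x)⟩ : Fin (n+1)) : ℕ)
          = hammingDist w x from rfl] at hv
        rw [hv]
        exact h
      have hG : (∑ j ∈ Finset.univ.filter (fun j : Fin (n + 1) => (j : ℕ) ≤ r), ((bdMatrix n (a - 1) γmin γmax lam) ^ (m+1)) 0 j)
          = ∑ t ∈ Finset.range (n+1), sdbdBeta n (a - 1) γmin γmax lam m t * sdbdT n (a - 1) γmin γmax lam r t := by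
        simp only [pow_succ, Matrix.mul_apply]
        rw [Finset.sum_comm]
        rw [← Fin.sum_univ_eq_sum_range (fun t => sdbdBeta n (a - 1) γmin γmax lam m t * sdbdT n (a - 1) γmin γmax lam r t) (n+1)]
        refine Finset.sum_congr rfl fun kk _ => ?_
        rw [sdbdBeta_val m kk, sdbdT_val r kk, Finset.mul_sum]
      rw [hG]
      calc ∑ z ∈ Finset.univ.filter (fun z : Fin n → Fin a => hammingDist z x ≤ r), ((1 + (((n : ℝ) * ((a - 1 : ℕ) : ℝ) * lam))⁻¹ • Q) ^ (m+1)) x z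
          = ∑ w, ((1 + (((n : ℝ) * ((a - 1 : ℕ) : ℝ) * lam))⁻¹ • Q) ^ m) x w * (∑ z ∈ Finset.univ.filter (fun z : Fin n → Fin a => hammingDist z x ≤ r), (1 + (((n : ℝ) * ((a - 1 : ℕ) : ℝ) * lam))⁻¹ • Q) w z) := by
            simp only [pow_succ, Matrix.mul_apply]
            rw [Finset.sum_comm]
            exact Finset.sum_congr rfl fun w _ => (Finset.mul_sum _ _ _).symm
        _ ≤ ∑ w, ((1 + (((n : ℝ) * ((a - 1 : ℕ) : ℝ) * lam))⁻¹ • Q) ^ m) x w * sdbdT n (a - 1) γmin γmax lam r (hammingDist w x) :=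
            Finset.sum_le_sum fun w _ =>
              mul_le_mul_of_nonneg_left (hstep w) (hRpow m x w)
        _ = ∑ t ∈ Finset.range (n+1),
              (∑ w ∈ Finset.univ.filter (fun w => hammingDist w x = t), ((1 + (((n : ℝ) * ((a - 1 : ℕ) : ℝ) * lam))⁻¹ • Q) ^ m) x w)
                * sdbdT n (a - 1) γmin γmax lam r t := by
            have hfib := sdbd_fiber x
              (fun w => ((1 + (((n : ℝ) * ((a - 1 : ℕ) : ℝ) * lam))⁻¹ • Q) ^ m) x w * sdbdT n (a - 1) γmin γmax lam r (hammingDist w x)) (n+1)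
            rw [huniv] at hfib
            rw [← hfib]
            refine Finset.sum_congr rfl fun t _ => ?_
            rw [Finset.sum_mul]
            exact Finset.sum_congr rfl fun w hw => by
              rw [(Finset.mem_filter.mp hw).2]
        _ ≤ ∑ t ∈ Finset.range (n+1), sdbdBeta n (a - 1) γmin γmax lam m t * sdbdT n (a - 1) γmin γmax lam r t := by
            have hpart : ∀ r' < n+1, 0 ≤ ∑ k ∈ Finset.range (r'+1),
                (sdbdBeta n (a - 1) γmin γmax lam m k
                  - ∑ w ∈ Finset.univ.filter (fun w => hammingDist w x = k), ((1 + (((n : ℝ) * ((a - 1 : ℕ) : ℝ) * lam))⁻¹ • Q) ^ m) x w) := by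
              intro r' _
              rw [Finset.sum_sub_distrib]
              have hν' : (∑ k ∈ Finset.range (r'+1),
                  ∑ w ∈ Finset.univ.filter (fun w => hammingDist w x = k), ((1 + (((n : ℝ) * ((a - 1 : ℕ) : ℝ) * lam))⁻¹ • Q) ^ m) x w)
                  = ∑ z ∈ Finset.univ.filter (fun z : Fin n → Fin a => hammingDist z x ≤ r'),
                      ((1 + (((n : ℝ) * ((a - 1 : ℕ) : ℝ) * lam))⁻¹ • Q) ^ m) x z := by
                rw [sdbd_fiber x (fun w => ((1 + (((n : ℝ) * ((a - 1 : ℕ) : ℝ) * lam))⁻¹ • Q) ^ m) x w) (r'+1)]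
                refine Finset.sum_congr ?_ (fun _ _ => rfl)
                ext w
                simp only [Finset.mem_filter, Finset.mem_univ, true_and]
                omega
              rw [hν', sdbd_beta_sum m r']
              have := ih r'
              linarith
            have htot : ∑ k ∈ Finset.range (n+1),
                (sdbdBeta n (a - 1) γmin γmax lam m k
                  - ∑ w ∈ Finset.univ.filter (fun w => hammingDist w x = k), ((1 + (((n : ℝ) * ((a - 1 : ℕ) : ℝ) * lam))⁻¹ • Q) ^ m) x w) = 0 := by
              rw [Finset.sum_sub_distrib]
              have hνt : (∑ k ∈ Finset.range (n+1),
                  ∑ w ∈ Finset.univ.filter (fun w => hammingDist w x = k), ((1 + (((n : ℝ) * ((a - 1 : ℕ) : ℝ) * lam))⁻¹ • Q) ^ m) x w) = 1 := by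
                rw [sdbd_fiber x (fun w => ((1 + (((n : ℝ) * ((a - 1 : ℕ) : ℝ) * lam))⁻¹ • Q) ^ m) x w) (n+1), huniv]
                exact hRrow m x
              have hβt : ∑ k ∈ Finset.range (n+1), sdbdBeta n (a - 1) γmin γmax lam m k = 1 := by
                rw [← Fin.sum_univ_eq_sum_range (sdbdBeta n (a - 1) γmin γmax lam m) (n+1)]
                rw [Finset.sum_congr rfl (fun j _ => sdbdBeta_val m j)]
                exact hBrow m 0
              rw [hνt, hβt]
              ring
            have hmono : ∀ i, i+1 < n+1 →
                sdbdT n (a - 1) γmin γmax lam r (i+1) ≤ sdbdT n (a - 1) γmin γmax lam r i := by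
              intro i hi
              rw [sdbdT, sdbdT, dif_pos (by omega : i < n+1), dif_pos (by omega : i+1 < n+1)]
              exact sdbd_T_mono hn hq1 hγmin hγ hl1 hl2 r i (by omega)
            have habel := sdbd_abel
              (fun k => sdbdBeta n (a - 1) γmin γmax lam m k
                - ∑ w ∈ Finset.univ.filter (fun w => hammingDist w x = k), ((1 + (((n : ℝ) * ((a - 1 : ℕ) : ℝ) * lam))⁻¹ • Q) ^ m) x w)
              (sdbdT n (a - 1) γmin γmax lam r) (n+1) hpart hmono
            rw [htot, zero_mul] at habel
            have hsplit : (∑ k ∈ Finset.range (n+1),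
                (sdbdBeta n (a - 1) γmin γmax lam m k
                  - ∑ w ∈ Finset.univ.filter (fun w => hammingDist w x = k), ((1 + (((n : ℝ) * ((a - 1 : ℕ) : ℝ) * lam))⁻¹ • Q) ^ m) x w)
                  * sdbdT n (a - 1) γmin γmax lam r k)
                = (∑ k ∈ Finset.range (n+1), sdbdBeta n (a - 1) γmin γmax lam m k * sdbdT n (a - 1) γmin γmax lam r k)
                  - ∑ k ∈ Finset.range (n+1),
                      (∑ w ∈ Finset.univ.filter (fun w => hammingDist w x = k), ((1 + (((n : ℝ) * ((a - 1 : ℕ) : ℝ) * lam))⁻¹ • Q) ^ m) x w)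
                        * sdbdT n (a - 1) γmin γmax lam r k := by
              rw [← Finset.sum_sub_distrib]
              exact Finset.sum_congr rfl fun k _ => by ring
            rw [hsplit] at habel
            linarith
  constructor
  · exact key m r
  · intro y hy
    refine le_trans ?_ (key m r)
    refine Finset.single_le_sum (fun z _ => hRpow m x z) ?_
    simp only [Finset.mem_filter, Finset.mem_univ, true_and]
    rw [hammingDist_comm]
    omega
end

section
/- Stationary distribution of the birth-death chain is binomial (Lemma 5, part 1): Fix integers n ≥ 1, q ≥ 1 and reals 0 < γmin ≤ γmax, λ ≥ max(γmax, γmin + γmax/q), and let B be the (n+1)×(n+1) birth-death transition matrix on {0,...,n} with B_{i,i−1} = γmax·i/(nqλ), B_{i,i+1} = (γmin/λ)(1 − i/n), B_{i,i} = 1 − B_{i,i−1} − B_{i,i+1}. Set θ := q·γmin/γmax and define ν(x) := C(n,x)·θ^x/(1+θ)^n for x ∈ {0,...,n}, i.e., ν is the Binomial(n, θ/(1+θ)) = Binomial(n, q/(q+γ★)) distribution with γ★ := γmax/γmin. Then ν is a probability distribution satisfying the detailed balance equations ν(i)·B_{i,j} = ν(j)·B_{j,i} for all i, j, and hence ν is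 stationary for B: Σᵢ ν(i) B_{i,x} = ν(x) for all x. -/
/-- **Stationary distribution of the birth-death chain is binomial (Lemma 5, part 1).**
With `θ = qγmin/γmax`, the distribution `ν(x) = C(n,x) θ^x/(1+θ)^n` (Binomial(n, θ/(1+θ)))
is a probability distribution satisfying detailed balance for `B`, hence is stationary. -/
theorem bd_stationary_binomial
    (n q : ℕ) (hn : 1 ≤ n) (hq : 1 ≤ q)
    (γmin γmax lam : ℝ)
    (hγmin : 0 < γmin) (hγ : γmin ≤ γmax)
    (hlam : max γmax (γmin + γmax / (q : ℝ)) ≤ lam)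
    (θ : ℝ) (hθ : θ = q * γmin / γmax)
    (ν : Fin (n + 1) → ℝ)
    (hν : ∀ x : Fin (n + 1), ν x = (n.choose (x : ℕ) : ℝ) * θ ^ (x : ℕ) / (1 + θ) ^ n) :
    (∀ x, 0 ≤ ν x) ∧ (∑ x, ν x = 1)
    ∧ (∀ i j, ν i * bdMatrix n q γmin γmax lam i j = ν j * bdMatrix n q γmin γmax lam j i)
    ∧ (∀ x, ∑ i, ν i * bdMatrix n q γmin γmax lam i x = ν x) := by
  have hγmax : 0 < γmax := lt_of_lt_of_le hγmin hγ
  have hlam' : 0 < lam := lt_of_lt_of_le hγmax ((le_max_left _ _).trans hlam)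
  have hnR : (0 : ℝ) < n := by exact_mod_cast hn
  have hqR : (0 : ℝ) < q := by exact_mod_cast hq
  have hθ0 : 0 < θ := by rw [hθ]; positivity
  have h1θ : (0 : ℝ) < 1 + θ := by linarith
  -- key combinatorial identity
  have hmain : ∀ k : ℕ, k < n →
      (n.choose (k + 1) : ℝ) * θ ^ (k + 1) * (γmax * ((k : ℝ) + 1) / ((n : ℝ) * q * lam))
        = (n.choose k : ℝ) * θ ^ k * ((γmin / lam) * (1 - (k : ℝ) / n)) := by
    intro k hk
    have hc : (n.choose (k + 1) : ℝ) * ((k : ℝ) + 1) = (n.choose k : ℝ) * ((n : ℝ) - k) := by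
      have h := Nat.choose_succ_right_eq n k
      have h2 : ((n.choose (k + 1)) : ℝ) * ((k : ℝ) + 1)
          = ((n.choose k) : ℝ) * (((n - k : ℕ) : ℕ) : ℝ) := by exact_mod_cast h
      rw [Nat.cast_sub hk.le] at h2
      linarith
    have hpow : θ ^ (k + 1) = θ ^ k * θ := pow_succ θ k
    rw [hpow, hθ]
    have hγmax' : γmax ≠ 0 := ne_of_gt hγmax
    have hlam'' : lam ≠ 0 := ne_of_gt hlam'
    have hn0 : (n : ℝ) ≠ 0 := ne_of_gt hnR
    have hq0 : (q : ℝ) ≠ 0 := ne_of_gt hqR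
    field_simp
    linear_combination hc
  -- detailed balance (half)
  have hdb' : ∀ i j : Fin (n + 1), (i : ℕ) < (j : ℕ) →
      ν i * bdMatrix n q γmin γmax lam i j = ν j * bdMatrix n q γmin γmax lam j i := by
    intro i j h
    have hij : ¬ i = j := by simp [Fin.ext_iff]; omega
    have hji : ¬ j = i := by simp [Fin.ext_iff]; omega
    by_cases hadj : (i : ℕ) + 1 = (j : ℕ)
    · have e1 : bdMatrix n q γmin γmax lam i j = (γmin / lam) * (1 - (i : ℕ) / n) := by
        simp only [bdMatrix, Matrix.of_apply]
        rw [if_neg (by omega), if_pos hadj]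
      have e2 : bdMatrix n q γmin γmax lam j i
          = γmax * (j : ℕ) / ((n : ℝ) * q * lam) := by
        simp only [bdMatrix, Matrix.of_apply]
        rw [if_pos hadj]
      have hk : (i : ℕ) < n := by omega
      have hjv : (j : ℕ) = (i : ℕ) + 1 := hadj.symm
      rw [e1, e2, hν i, hν j, hjv]
      have hm := hmain (i : ℕ) hk
      push_cast at hm ⊢
      linear_combination (-(1 : ℝ) / (1 + θ) ^ n) * hm
    · have e1 : bdMatrix n q γmin γmax lam i j = 0 := by
        simp only [bdMatrix, Matrix.of_apply]
        rw [if_neg (by omega), if_neg (by omega), if_neg hij]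
      have e2 : bdMatrix n q γmin γmax lam j i = 0 := by
        simp only [bdMatrix, Matrix.of_apply]
        rw [if_neg (by omega), if_neg (by omega), if_neg hji]
      rw [e1, e2, mul_zero, mul_zero]
  have hdb : ∀ i j, ν i * bdMatrix n q γmin γmax lam i j
      = ν j * bdMatrix n q γmin γmax lam j i := by
    intro i j
    rcases lt_trichotomy (i : ℕ) (j : ℕ) with h | h | h
    · exact hdb' i j h
    · rw [Fin.ext h]
    · exact (hdb' j i h).symm
  -- row sums
  have hrow : ∀ x : Fin (n + 1), ∑ j, bdMatrix n q γmin γmax lam x j = 1 := by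
    intro x
    set A : ℝ := γmax * (x : ℕ) / ((n : ℝ) * q * lam) with hA
    set C : ℝ := (γmin / lam) * (1 - (x : ℕ) / n) with hC
    have hdecomp : ∀ j : Fin (n + 1), bdMatrix n q γmin γmax lam x j =
        (if (j : ℕ) + 1 = (x : ℕ) then A else 0)
        + (if (x : ℕ) + 1 = (j : ℕ) then C else 0)
        + (if x = j then 1 - A - C else 0) := by
      intro j
      simp only [bdMatrix, Matrix.of_apply, Fin.ext_iff]
      split_ifs <;> first | ring1 | (exfalso; omega)
    rw [Finset.sum_congr rfl fun j _ => hdecomp j]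
    rw [Finset.sum_add_distrib, Finset.sum_add_distrib]
    have h3 : (∑ j : Fin (n + 1), if x = j then 1 - A - C else 0) = 1 - A - C := by
      rw [Finset.sum_ite_eq]
      simp
    have h1 : (∑ j : Fin (n + 1), if (j : ℕ) + 1 = (x : ℕ) then A else 0) = A := by
      rcases Nat.eq_zero_or_pos (x : ℕ) with hx0 | hxpos
      · have : ∀ j : Fin (n + 1), (if (j : ℕ) + 1 = (x : ℕ) then A else 0) = 0 := by
          intro j; rw [if_neg (by omega)]
        rw [Finset.sum_congr rfl fun j _ => this j]
        simp [hA, hx0]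
      · obtain ⟨m, hm⟩ := Nat.exists_eq_add_of_lt hxpos
        have hm' : (x : ℕ) = m + 1 := by omega
        have hmn : m < n + 1 := by have := x.isLt; omega
        rw [Finset.sum_eq_single (⟨m, hmn⟩ : Fin (n + 1))]
        · rw [if_pos (by simp [hm'])]
        · intro b _ hb
          have hb' : (b : ℕ) ≠ m := fun hh => hb (Fin.ext hh)
          rw [if_neg (by omega)]
        · intro hmem; exact absurd (Finset.mem_univ _) hmem
    have h2 : (∑ j : Fin (n + 1), if (x : ℕ) + 1 = (j : ℕ) then C else 0) = C := by
      rcases lt_or_ge (x : ℕ) n with hxn | hxn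
      · have hmn : (x : ℕ) + 1 < n + 1 := by omega
        rw [Finset.sum_eq_single (⟨(x : ℕ) + 1, hmn⟩ : Fin (n + 1))]
        · rw [if_pos (by simp)]
        · intro b _ hb
          have hb' : (b : ℕ) ≠ (x : ℕ) + 1 := fun hh => hb (Fin.ext hh)
          rw [if_neg (by omega)]
        · intro hmem; exact absurd (Finset.mem_univ _) hmem
      · have hxn' : (x : ℕ) = n := by have := x.isLt; omega
        have : ∀ j : Fin (n + 1), (if (x : ℕ) + 1 = (j : ℕ) then C else 0) = 0 := by
          intro j; rw [if_neg (by have := j.isLt; omega)]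
        rw [Finset.sum_congr rfl fun j _ => this j]
        have : C = 0 := by
          rw [hC, hxn', div_self (ne_of_gt hnR)]
          ring
        simp [this]
    rw [h1, h2, h3]; ring
  refine ⟨fun x => by rw [hν x]; positivity, ?_, hdb, ?_⟩
  · have key : (∑ k ∈ Finset.range (n + 1), (n.choose k : ℝ) * θ ^ k) = (1 + θ) ^ n := by
      rw [add_comm 1 θ, add_pow]
      exact Finset.sum_congr rfl fun k _ => by ring
    calc (∑ x : Fin (n + 1), ν x)
        = (∑ x : Fin (n + 1), (n.choose (x : ℕ) : ℝ) * θ ^ (x : ℕ)) / (1 + θ) ^ n := by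
          rw [Finset.sum_div]; exact Finset.sum_congr rfl fun x _ => hν x
      _ = 1 := by
          rw [Fin.sum_univ_eq_sum_range (fun k => (n.choose k : ℝ) * θ ^ k), key,
            div_self (ne_of_gt (pow_pos h1θ n))]
  · intro x
    calc (∑ i, ν i * bdMatrix n q γmin γmax lam i x)
        = ∑ i, ν x * bdMatrix n q γmin γmax lam x i :=
          Finset.sum_congr rfl fun i _ => hdb i x
      _ = ν x := by rw [← Finset.mul_sum, hrow, mul_one]
end

section
/- Minimum of the stationary distribution (Lemma 5, part 2): With B, θ = q·γmin/γmax, γ★ = γmax/γmin, and ν(x) = C(n,x)·θ^x/(1+θ)^n as above, the minimum of ν over {0,...,n} is attained at an endpoint and equals min(1, θ^n)/(1+θ)^n = min(γ★^n, q^n)/(γ★ + q)^n. -/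
/-- **Minimum of the stationary distribution (Lemma 5, part 2).**
With `θ = qγmin/γmax`, `γ★ = γmax/γmin` and `ν(x) = C(n,x)θ^x/(1+θ)^n`, the minimum of
`ν` over `{0,…,n}` is attained at an endpoint and equals
`min(1,θ^n)/(1+θ)^n = min(γ★^n, q^n)/(γ★+q)^n`. -/
theorem bd_stationary_min
    (n q : ℕ) (hn : 1 ≤ n) (hq : 1 ≤ q)
    (γmin γmax : ℝ)
    (hγmin : 0 < γmin) (hγ : γmin ≤ γmax)
    (θ γstar : ℝ) (hθ : θ = q * γmin / γmax) (hγstar : γstar = γmax / γmin)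
    (ν : Fin (n + 1) → ℝ)
    (hν : ∀ x : Fin (n + 1), ν x = (n.choose (x : ℕ) : ℝ) * θ ^ (x : ℕ) / (1 + θ) ^ n) :
    (∀ x, min 1 (θ ^ n) / (1 + θ) ^ n ≤ ν x)
    ∧ (ν 0 = min 1 (θ ^ n) / (1 + θ) ^ n ∨ ν (Fin.last n) = min 1 (θ ^ n) / (1 + θ) ^ n)
    ∧ min 1 (θ ^ n) / (1 + θ) ^ n = min (γstar ^ n) ((q : ℝ) ^ n) / (γstar + q) ^ n := by
  have hγmax : 0 < γmax := lt_of_lt_of_le hγmin hγ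
  have hqpos : (0:ℝ) < q := by exact_mod_cast hq
  have hθpos : 0 < θ := by
    rw [hθ]; positivity
  have h1θ : (0:ℝ) < (1 + θ) ^ n := by positivity
  have hγs : 0 < γstar := by rw [hγstar]; positivity
  refine ⟨?_, ?_, ?_⟩
  · intro x
    rw [hν x]
    gcongr ?_ / _
    have hch : (1:ℝ) ≤ (n.choose (x:ℕ) : ℝ) := by
      exact_mod_cast Nat.one_le_iff_ne_zero.mpr (Nat.choose_pos (Nat.lt_succ_iff.mp x.isLt)).ne'
    have hxle : (x:ℕ) ≤ n := Nat.lt_succ_iff.mp x.isLt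
    have hpow : min 1 (θ ^ n) ≤ θ ^ (x:ℕ) := by
      rcases le_total θ 1 with h | h
      · exact (min_le_right _ _).trans (pow_le_pow_of_le_one hθpos.le h hxle)
      · exact (min_le_left _ _).trans (one_le_pow₀ h)
    calc min 1 (θ ^ n) ≤ θ ^ (x:ℕ) := hpow
      _ = 1 * θ ^ (x:ℕ) := (one_mul _).symm
      _ ≤ (n.choose (x:ℕ) : ℝ) * θ ^ (x:ℕ) := by
          apply mul_le_mul_of_nonneg_right hch (by positivity)
  · rcases le_total θ 1 with h | h
    · right
      rw [hν]
      have : θ ^ n ≤ 1 := pow_le_one₀ hθpos.le h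
      simp [Fin.val_last, Nat.choose_self, min_eq_right this]
    · left
      rw [hν]
      have : (1:ℝ) ≤ θ ^ n := one_le_pow₀ h
      simp [min_eq_left this]
  · have hθeq : θ = q / γstar := by
      rw [hθ, hγstar]; field_simp
    have h1 : 1 + θ = (γstar + q) / γstar := by
      rw [hθeq]; field_simp
    have hsum : (0:ℝ) < γstar + q := by positivity
    rcases le_total (γstar ^ n) ((q:ℝ) ^ n) with h | h
    · rw [min_eq_left h]
      have : (1:ℝ) ≤ θ ^ n := by
        rw [hθeq, div_pow]
        rw [le_div_iff₀ (by positivity)]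
        simpa using h
      rw [min_eq_left this, h1, div_pow, one_div_div]
    · rw [min_eq_right h]
      have : θ ^ n ≤ 1 := by
        rw [hθeq, div_pow, div_le_one (by positivity)]
        exact h
      rw [min_eq_right this, h1, div_pow, hθeq, div_pow]
      rw [div_div_div_cancel_right₀]
      positivity
end

section
/- Stationary distribution ratio bound (Lemma 6): With θ = q·γmin/γmax, γ★ = γmax/γmin, and ν(x) = C(n,x)·θ^x/(1+θ)^n the Binomial(n, θ/(1+θ)) distribution on {0,...,n}, suppose 0 < δ ≤ q/(q + e·γ★), set r★ := ⌊nδ⌋, and let r be an integer with 0 ≤ r ≤ ⌊nδ⌋/2. Then ν(r)/ν(r★) ≤ exp(−nδ/2 + 1). -/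
set_option maxHeartbeats 1000000 in
/-- **Stationary distribution ratio bound (Lemma 6).**
With `θ = qγmin/γmax`, `γ★ = γmax/γmin` and `ν(x) = C(n,x)θ^x/(1+θ)^n`, if
`0 < δ ≤ q/(q + e γ★)`, `nδ ≥ 1`, `r★ = ⌊nδ⌋` and `0 ≤ r ≤ ⌊nδ⌋/2`, then
`ν(r)/ν(r★) ≤ exp(−nδ/2 + 1)`. -/
theorem stationary_ratio_bound
    (n q : ℕ) (hn : 1 ≤ n) (hq : 1 ≤ q)
    (γmin γmax δ : ℝ)
    (hγmin : 0 < γmin) (hγ : γmin ≤ γmax)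
    (θ γstar : ℝ) (hθ : θ = q * γmin / γmax) (hγstar : γstar = γmax / γmin)
    (hδ0 : 0 < δ) (hδ : δ ≤ (q : ℝ) / (q + Real.exp 1 * γstar))
    (hnδ : 1 ≤ (n : ℝ) * δ)
    (r : ℕ) (hr : (r : ℝ) ≤ (⌊(n : ℝ) * δ⌋₊ : ℝ) / 2)
    (ν : ℕ → ℝ)
    (hν : ∀ x : ℕ, ν x = (n.choose x : ℝ) * θ ^ x / (1 + θ) ^ n) :
    ν r / ν ⌊(n : ℝ) * δ⌋₊ ≤ Real.exp (-((n : ℝ) * δ / 2) + 1) := by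
  set R := ⌊(n : ℝ) * δ⌋₊ with hRdef
  have hγmax : 0 < γmax := lt_of_lt_of_le hγmin hγ
  have hq' : (0:ℝ) < q := by exact_mod_cast hq
  have hn' : (0:ℝ) < n := by exact_mod_cast hn
  have hθpos : 0 < θ := by rw [hθ]; exact div_pos (mul_pos hq' hγmin) hγmax
  have hgspos : 0 < γstar := by rw [hγstar]; exact div_pos hγmax hγmin
  have hθγ : θ * γstar = q := by
    rw [hθ, hγstar]; field_simp
  have he : (0:ℝ) < Real.exp 1 := Real.exp_pos 1
  have hden : 0 < (q:ℝ) + Real.exp 1 * γstar := by positivity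
  have h1 : δ * ((q:ℝ) + Real.exp 1 * γstar) ≤ q := (le_div_iff₀ hden).mp hδ
  have hkey : Real.exp 1 * δ ≤ (1 - δ) * θ := by
    have h2 : Real.exp 1 * δ * γstar ≤ (1 - δ) * θ * γstar := by nlinarith
    exact le_of_mul_le_mul_right h2 hgspos
  have hδ1 : δ < 1 := by nlinarith
  have hRle : (R:ℝ) ≤ (n:ℝ) * δ := Nat.floor_le (by positivity)
  have hRn : R < n := by
    have : (R:ℝ) < n := lt_of_le_of_lt hRle (by nlinarith)
    exact_mod_cast this
  -- positivity of ν at points ≤ n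
  have hνpos : ∀ x : ℕ, x ≤ n → 0 < ν x := by
    intro x hx
    rw [hν x]
    have hc : 0 < (n.choose x : ℝ) := by exact_mod_cast Nat.choose_pos hx
    positivity
  -- one-step decay
  have hstep : ∀ x : ℕ, x < R → ν x ≤ Real.exp (-1) * ν (x+1) := by
    intro x hx
    have hxn : x < n := hx.trans hRn
    have hxR : (x:ℝ) + 1 ≤ R := by exact_mod_cast hx
    have hc := Nat.choose_succ_right_eq n x
    have hchoose : ((n.choose (x+1)):ℝ) * ((x:ℝ)+1) = (n.choose x : ℝ) * ((n:ℝ) - x) := by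
      have : ((n.choose (x+1) * (x+1) : ℕ) : ℝ) = ((n.choose x * (n - x) : ℕ) : ℝ) := by
        exact_mod_cast congrArg (Nat.cast : ℕ → ℝ) hc
      push_cast [Nat.cast_sub hxn.le] at this
      linarith
    have hmain : Real.exp 1 * ((x:ℝ)+1) ≤ ((n:ℝ) - x) * θ := by
      have hA : Real.exp 1 * ((x:ℝ)+1) ≤ Real.exp 1 * ((n:ℝ) * δ) :=
        mul_le_mul_of_nonneg_left (hxR.trans hRle) he.le
      have hB : Real.exp 1 * ((n:ℝ) * δ) ≤ (n:ℝ) * ((1-δ) * θ) := by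
        calc Real.exp 1 * ((n:ℝ) * δ) = (n:ℝ) * (Real.exp 1 * δ) := by ring
          _ ≤ (n:ℝ) * ((1-δ) * θ) := mul_le_mul_of_nonneg_left hkey hn'.le
      have hxδ : (x:ℝ) ≤ (n:ℝ) * δ := by linarith
      have hC : (n:ℝ) * ((1-δ) * θ) = ((n:ℝ) - (n:ℝ)*δ) * θ := by ring
      have hD : ((n:ℝ) - (n:ℝ)*δ) * θ ≤ ((n:ℝ) - x) * θ :=
        mul_le_mul_of_nonneg_right (by linarith) hθpos.le
      linarith
    have hsuff : Real.exp 1 * ν x ≤ ν (x+1) := by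
      rw [hν x, hν (x+1)]
      rw [← mul_div_assoc]
      have hP : (0:ℝ) < (1 + θ) ^ n := by positivity
      rw [div_le_div_iff₀ hP hP]
      apply mul_le_mul_of_nonneg_right ?_ hP.le
      · have ht : (0:ℝ) < θ ^ x := pow_pos hθpos x
        have hcpos : (0:ℝ) < (n.choose x : ℝ) := by exact_mod_cast Nat.choose_pos hxn.le
        have hx1 : (0:ℝ) < (x:ℝ) + 1 := by positivity
        rw [pow_succ]
        have H := mul_le_mul_of_nonneg_left hmain (mul_pos hcpos ht).le
        have H2 : Real.exp 1 * ((n.choose x : ℝ) * θ ^ x) * ((x:ℝ)+1) ≤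
            (n.choose (x+1) : ℝ) * (θ ^ x * θ) * ((x:ℝ)+1) := by
          calc Real.exp 1 * ((n.choose x : ℝ) * θ ^ x) * ((x:ℝ)+1)
              = (n.choose x : ℝ) * θ ^ x * (Real.exp 1 * ((x:ℝ)+1)) := by ring
            _ ≤ (n.choose x : ℝ) * θ ^ x * (((n:ℝ) - x) * θ) := H
            _ = ((n.choose x : ℝ) * ((n:ℝ) - x)) * θ * θ ^ x := by ring
            _ = ((n.choose (x+1) : ℝ) * ((x:ℝ)+1)) * θ * θ ^ x := by rw [← hchoose]
            _ = (n.choose (x+1) : ℝ) * (θ ^ x * θ) * ((x:ℝ)+1) := by ring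
        exact le_of_mul_le_mul_right H2 hx1
    calc ν x = Real.exp (-1) * (Real.exp 1 * ν x) := by
            rw [← mul_assoc, ← Real.exp_add]; norm_num
      _ ≤ Real.exp (-1) * ν (x+1) :=
            mul_le_mul_of_nonneg_left hsuff (Real.exp_pos _).le
  -- iterate
  have hiter : ∀ k x : ℕ, x + k ≤ R → ν x ≤ Real.exp (-(k:ℝ)) * ν (x+k) := by
    intro k
    induction k with
    | zero => intro x hx; simp
    | succ k ih =>
        intro x hx
        have h1 : ν x ≤ Real.exp (-1) * ν (x+1) := hstep x (by omega)
        have h2 : ν (x+1) ≤ Real.exp (-(k:ℝ)) * ν (x+1+k) := ih (x+1) (by omega)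
        calc ν x ≤ Real.exp (-1) * ν (x+1) := h1
          _ ≤ Real.exp (-1) * (Real.exp (-(k:ℝ)) * ν (x+1+k)) :=
              mul_le_mul_of_nonneg_left h2 (Real.exp_pos _).le
          _ = Real.exp (-((k+1:ℕ):ℝ)) * ν (x+(k+1)) := by
              rw [← mul_assoc, ← Real.exp_add, show x+1+k = x+(k+1) from by omega]
              push_cast; ring_nf
  have hrR : r ≤ R := by
    have hR0 : (0:ℝ) ≤ (R:ℝ) := Nat.cast_nonneg R
    have : (r:ℝ) ≤ (R:ℝ) := hr.trans (by linarith)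
    exact_mod_cast this
  have hνR : 0 < ν R := hνpos R hRn.le
  have hmono := hiter (R - r) r (by omega)
  rw [show r + (R - r) = R from by omega] at hmono
  rw [div_le_iff₀ hνR]
  calc ν r ≤ Real.exp (-((R - r : ℕ):ℝ)) * ν R := hmono
    _ ≤ Real.exp (-((n : ℝ) * δ / 2) + 1) * ν R := by
        apply mul_le_mul_of_nonneg_right ?_ hνR.le
        apply Real.exp_le_exp.mpr
        have hcast : ((R - r : ℕ):ℝ) = (R:ℝ) - (r:ℝ) := by
          push_cast [Nat.cast_sub hrR]; ring
        rw [hcast]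
        have hfl : (n:ℝ) * δ - 1 < (R:ℝ) := by
          have := Nat.lt_floor_add_one ((n:ℝ) * δ)
          rw [← hRdef] at this
          linarith
        linarith
end
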